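/- Let Gt = (V, E, {f_v}) be a general threshold instance whose underlying graph G = (V, E) is a directed acyclic graph (DAG). If f_v is AD-k for every node v ∈ V (Gt is locally AD-k), then the spread function σ is AD-k (Gt is globally AD-k). -/

import Mathlib

open MeasureTheory Finset
open scoped Classical

noncomputable section


/-- The difference of a set function `f` over a set `A`, evaluated at `S`:
`Δ_A f(S) = ∑_{B ⊆ A} (-1)^{|B|} f(S ∪ (A \ B))`. -/
def adDiff {V : Type*} [DecidableEq V] (f : Finset V → ℝ) (A S : Finset V) : ℝ :=
  ∑ B ∈ A.powerset, (-1 : ℝ) ^ B.card * f (S ∪ (A \ B))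

/-- A set function `f : 2^V → ℝ` is AD-`k` if `(-1)^{|A|+1} Δ_A f(S) ≥ 0` for every
nonempty `A` with `|A| ≤ k` and every `S`. -/
def IsADk {V : Type*} [DecidableEq V] (f : Finset V → ℝ) (k : ℕ) : Prop :=
  ∀ A S : Finset V, A.Nonempty → A.card ≤ k →
    0 ≤ (-1 : ℝ) ^ (A.card + 1) * adDiff f A S



/-- A general threshold instance on a finite directed graph `(V, E)`:
each node `v` has a threshold function `f v : 2^V → [0,1]` that is monotone,
vanishes on `∅`, and depends only on the in-neighbors of `v`. -/
structure GTInstance (V : Type*) [Fintype V] [DecidableEq V] where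
  E : V → V → Prop
  f : V → Finset V → ℝ
  f_nonneg : ∀ v S, 0 ≤ f v S
  f_le_one : ∀ v S, f v S ≤ 1
  f_mono : ∀ v, Monotone (f v)
  f_empty : ∀ v, f v ∅ = 0
  f_local : ∀ v S, f v S = f v (S.filter fun u => E u v)

variable {V : Type*} [Fintype V] [DecidableEq V]

/-- The deterministic cascade for threshold vector `θ` and seed set `S`:
`C_0 = S`, `C_{t+1} = C_t ∪ {v : f_v(C_t) ≥ θ_v}`. -/
def cascade (gt : GTInstance V) (θ : V → ℝ) (S : Finset V) : ℕ → Finset V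
  | 0 => S
  | t + 1 =>
      cascade gt θ S t ∪ Finset.univ.filter fun v => θ v ≤ gt.f v (cascade gt θ S t)

/-- The final active set of the cascade. -/
def finalSet (gt : GTInstance V) (θ : V → ℝ) (S : Finset V) : Finset V :=
  cascade gt θ S (Fintype.card V)

/-- The uniform (Lebesgue product) probability measure on `[0,1]^V`. -/
def cubeMeasure (V : Type*) [Fintype V] : Measure (V → ℝ) :=
  Measure.pi fun _ => volume.restrict (Set.Icc 0 1)

/-- `activationProb gt v S` is the probability (over uniform thresholds) that `v`
is active at the end of the diffusion started from seed set `S`. -/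
def activationProb (gt : GTInstance V) (v : V) (S : Finset V) : ℝ :=
  (cubeMeasure V {θ | v ∈ finalSet gt θ S}).toReal

/-- The spread function `σ(S) = ∑_{v ∈ V} P_v(S)`. -/
def spread (gt : GTInstance V) (S : Finset V) : ℝ :=
  ∑ v : V, activationProb gt v S

/-- The underlying graph is a layered graph with `m ≥ 2` layers (layer indices `1, …, m`),
all edges going from a node of layer `i+1` to a node of layer `i`. -/
def IsLayered (gt : GTInstance V) (m : ℕ) (layer : V → ℕ) : Prop :=
  2 ≤ m ∧ (∀ v, 1 ≤ layer v ∧ layer v ≤ m) ∧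
    ∀ u v, gt.E u v → layer u = layer v + 1

/-- The underlying graph is a directed acyclic graph (no directed cycles). -/
def IsDAG (gt : GTInstance V) : Prop := ∀ v, ¬ Relation.TransGen gt.E v v

namespace ADAux

lemma adDiff_empty (f : Finset V → ℝ) (S : Finset V) : adDiff f ∅ S = f S := by
  simp [adDiff]

lemma adDiff_congr {f g : Finset V → ℝ} (h : ∀ T, f T = g T) (A S : Finset V) :
    adDiff f A S = adDiff g A S := by
  simp only [adDiff, h]

lemma adDiff_add (f g : Finset V → ℝ) (A S : Finset V) :
    adDiff (fun T => f T + g T) A S = adDiff f A S + adDiff g A S := by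
  simp [adDiff, mul_add, Finset.sum_add_distrib]

lemma adDiff_sub (f g : Finset V → ℝ) (A S : Finset V) :
    adDiff (fun T => f T - g T) A S = adDiff f A S - adDiff g A S := by
  simp [adDiff, mul_sub, Finset.sum_sub_distrib]

lemma union_sdiff_insert_of_not_mem {x : V} {A B S : Finset V} (hxA : x ∉ A) (hxB : x ∉ B) :
    S ∪ (insert x A \ B) = insert x (S ∪ (A \ B)) := by
  rw [Finset.insert_sdiff_of_notMem _ hxB, Finset.union_insert]

lemma sdiff_insert_of_not_mem' {x : V} {A B : Finset V} (hxA : x ∉ A) :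
    insert x A \ insert x B = A \ B := by
  ext v
  simp only [Finset.mem_sdiff, Finset.mem_insert, not_or]
  constructor
  · rintro ⟨hv1 | hv1, hv2, hv3⟩
    · exact absurd hv1 hv2
    · exact ⟨hv1, hv3⟩
  · rintro ⟨hv1, hv2⟩
    exact ⟨Or.inr hv1, fun h => hxA (h ▸ hv1), hv2⟩

lemma adDiff_insert (f : Finset V → ℝ) {x : V} {A : Finset V} (hx : x ∉ A) (S : Finset V) :
    adDiff f (insert x A) S
      = adDiff (fun T => f (insert x T)) A S - adDiff f A S := by
  rw [adDiff, Finset.sum_powerset_insert hx]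
  have h1 : ∀ B ∈ A.powerset, (-1 : ℝ) ^ B.card * f (S ∪ (insert x A \ B))
      = (-1 : ℝ) ^ B.card * f (insert x (S ∪ (A \ B))) := by
    intro B hB
    rw [union_sdiff_insert_of_not_mem hx (fun h => hx (Finset.mem_powerset.mp hB h))]
  have h2 : ∀ B ∈ A.powerset, (-1 : ℝ) ^ (insert x B).card * f (S ∪ (insert x A \ insert x B))
      = -((-1 : ℝ) ^ B.card * f (S ∪ (A \ B))) := by
    intro B hB
    have hxB : x ∉ B := fun h => hx (Finset.mem_powerset.mp hB h)
    rw [Finset.card_insert_of_notMem hxB, sdiff_insert_of_not_mem' hx, pow_succ]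
    ring
  rw [Finset.sum_congr rfl h1, Finset.sum_congr rfl h2]
  rw [Finset.sum_neg_distrib]
  unfold adDiff
  ring

lemma adDiff_comp_insert (f : Finset V → ℝ) (x : V) (A S : Finset V) :
    adDiff (fun T => f (insert x T)) A S = adDiff f A (insert x S) := by
  unfold adDiff
  refine Finset.sum_congr rfl fun B _ => ?_
  rw [Finset.insert_union]

lemma sum_powerset_neg_one (A : Finset V) :
    ∑ B ∈ A.powerset, (-1 : ℝ) ^ B.card = if A = ∅ then 1 else 0 := by
  induction A using Finset.induction_on with
  | empty => simp
  | @insert x A hx ih =>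
    rw [Finset.sum_powerset_insert hx]
    have h2 : ∀ B ∈ A.powerset, (-1 : ℝ) ^ (insert x B).card = -((-1 : ℝ) ^ B.card) := by
      intro B hB
      rw [Finset.card_insert_of_notMem (fun h => hx (Finset.mem_powerset.mp hB h)), pow_succ]
      ring
    rw [Finset.sum_congr rfl h2, Finset.sum_neg_distrib]
    simp [Finset.insert_ne_empty]

lemma adDiff_const_on {f : Finset V → ℝ} {c : ℝ} {A S : Finset V}
    (h : ∀ B ∈ A.powerset, f (S ∪ (A \ B)) = c) :
    adDiff f A S = if A = ∅ then c else 0 := by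
  unfold adDiff
  rw [Finset.sum_congr rfl (fun B hB => by rw [h B hB])]
  rw [← Finset.sum_mul, sum_powerset_neg_one]
  by_cases hA : A = ∅ <;> simp [hA]

lemma adDiff_singleton (f : Finset V → ℝ) (x : V) (S : Finset V) :
    adDiff f {x} S = f (insert x S) - f S := by
  have : ({x} : Finset V) = insert x ∅ := rfl
  rw [this, adDiff_insert f (Finset.notMem_empty x) S, adDiff_empty, adDiff_empty]

lemma adDiff_ignore {f : Finset V → ℝ} {t : V} (hf : ∀ T, f (insert t T) = f T)
    {A : Finset V} (ht : t ∈ A) (S : Finset V) : adDiff f A S = 0 := by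
  rw [← Finset.insert_erase ht, adDiff_insert f (Finset.notMem_erase t A) S,
    adDiff_congr hf]
  exact sub_self _

lemma erase_union_of_not_mem {t : V} {S C : Finset V} (htC : t ∉ C) :
    (S ∪ C).erase t = S.erase t ∪ C := by
  rw [Finset.erase_union_distrib, Finset.erase_eq_of_notMem htC]

lemma ignore_insert_imp_erase {f : Finset V → ℝ} {t : V} (hf : ∀ T, f (insert t T) = f T) :
    ∀ T, f T = f (T.erase t) := by
  intro T
  by_cases ht : t ∈ T
  · conv_lhs => rw [← Finset.insert_erase ht]
    rw [hf]
  · rw [Finset.erase_eq_of_notMem ht]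

lemma adDiff_erase_right {f : Finset V → ℝ} {t : V} (hf : ∀ T, f T = f (T.erase t))
    {A : Finset V} (ht : t ∉ A) (S : Finset V) :
    adDiff f A S = adDiff f A (S.erase t) := by
  unfold adDiff
  refine Finset.sum_congr rfl fun B _ => ?_
  have htAB : t ∉ A \ B := fun h => ht (Finset.mem_sdiff.mp h).1
  rw [hf (S ∪ (A \ B)), hf (S.erase t ∪ (A \ B)), erase_union_of_not_mem htAB,
    erase_union_of_not_mem htAB, Finset.erase_idem]

lemma adDiff_mul (p q : Finset V → ℝ) (A S : Finset V) :
    adDiff (fun T => p T * q T) A S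
      = ∑ B ∈ A.powerset, adDiff p B (S ∪ (A \ B)) * adDiff q (A \ B) S := by
  induction A using Finset.induction_on generalizing p q S with
  | empty => simp [adDiff]
  | @insert x A hx ih =>
    rw [adDiff_insert _ hx S]
    have key : adDiff (fun T => p (insert x T) * q (insert x T)) A S
        = adDiff (fun T => p (insert x T) * (q (insert x T) - q T)) A S
          + adDiff (fun T => (p (insert x T) - p T) * q T) A S
          + adDiff (fun T => p T * q T) A S := by
      rw [← adDiff_add, ← adDiff_add]
      exact adDiff_congr (fun T => by ring) A S
    rw [key]
    have ih1 : adDiff (fun T => p (insert x T) * (q (insert x T) - q T)) A S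
        = ∑ B ∈ A.powerset,
            adDiff p B (insert x (S ∪ (A \ B))) * adDiff q (insert x (A \ B)) S := by
      rw [ih (fun T => p (insert x T)) (fun T => q (insert x T) - q T) S]
      refine Finset.sum_congr rfl fun B hB => ?_
      have hxAB : x ∉ A \ B := fun h => hx (Finset.mem_sdiff.mp h).1
      congr 1
      · exact (adDiff_comp_insert p x B (S ∪ (A \ B)))
      · rw [adDiff_sub, adDiff_insert q hxAB S, adDiff_comp_insert]
    have ih2 : adDiff (fun T => (p (insert x T) - p T) * q T) A S
        = ∑ B ∈ A.powerset,
            adDiff p (insert x B) (S ∪ (A \ B)) * adDiff q (A \ B) S := by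
      rw [ih (fun T => p (insert x T) - p T) q S]
      refine Finset.sum_congr rfl fun B hB => ?_
      have hxB : x ∉ B := fun h => hx (Finset.mem_powerset.mp hB h)
      congr 1
      rw [adDiff_insert p hxB, adDiff_sub, adDiff_comp_insert]
    rw [ih1, ih2, Finset.sum_powerset_insert hx]
    have e1 : ∀ B ∈ A.powerset,
        adDiff p B (S ∪ (insert x A \ B)) * adDiff q (insert x A \ B) S
          = adDiff p B (insert x (S ∪ (A \ B))) * adDiff q (insert x (A \ B)) S := by
      intro B hB
      have hxB : x ∉ B := fun h => hx (Finset.mem_powerset.mp hB h)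
      rw [Finset.insert_sdiff_of_notMem _ hxB, Finset.union_insert]
    have e2 : ∀ B ∈ A.powerset,
        adDiff p (insert x B) (S ∪ (insert x A \ insert x B)) * adDiff q (insert x A \ insert x B) S
          = adDiff p (insert x B) (S ∪ (A \ B)) * adDiff q (A \ B) S := by
      intro B hB
      rw [sdiff_insert_of_not_mem' hx]
    rw [Finset.sum_congr rfl e1, Finset.sum_congr rfl e2]
    ring


-- ## Section 2 : cmk class and the key closure lemmas

end ADAux

/-- completely-monotone-type alternating condition up to order `j`, including order `0`
(nonnegativity). -/
def cmk {V : Type*} [DecidableEq V] (f : Finset V → ℝ) (j : ℕ) : Prop :=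
  ∀ A S : Finset V, A.card ≤ j → 0 ≤ (-1 : ℝ) ^ A.card * adDiff f A S

namespace ADAux


lemma cmk_mono {f : Finset V → ℝ} {j j' : ℕ} (h : j' ≤ j) (hf : cmk f j) : cmk f j' :=
  fun A S hA => hf A S (hA.trans h)

lemma cmk_nonneg {f : Finset V → ℝ} {j : ℕ} (hf : cmk f j) (S : Finset V) : 0 ≤ f S := by
  have := hf ∅ S (by simp)
  simpa [adDiff_empty] using this

lemma cmk_mul {p q : Finset V → ℝ} {j : ℕ} (hp : cmk p j) (hq : cmk q j) :
    cmk (fun T => p T * q T) j := by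
  intro A S hA
  rw [adDiff_mul]
  rw [Finset.mul_sum]
  refine Finset.sum_nonneg fun B hB => ?_
  have hBsub : B ⊆ A := Finset.mem_powerset.mp hB
  have hcard : (A \ B).card + B.card = A.card := Finset.card_sdiff_add_card_eq_card hBsub
  have hsign : (-1 : ℝ) ^ A.card = (-1) ^ B.card * (-1) ^ (A \ B).card := by
    rw [← pow_add, ← hcard, add_comm]
  have h1 : 0 ≤ (-1 : ℝ) ^ B.card * adDiff p B (S ∪ (A \ B)) :=
    hp B (S ∪ (A \ B)) (le_trans (Finset.card_le_card hBsub) hA)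
  have h2 : 0 ≤ (-1 : ℝ) ^ (A \ B).card * adDiff q (A \ B) S :=
    hq (A \ B) S (le_trans (Finset.card_le_card (Finset.sdiff_subset)) hA)
  calc (0:ℝ) ≤ ((-1 : ℝ) ^ B.card * adDiff p B (S ∪ (A \ B)))
        * ((-1 : ℝ) ^ (A \ B).card * adDiff q (A \ B) S) := mul_nonneg h1 h2
    _ = (-1 : ℝ) ^ A.card * (adDiff p B (S ∪ (A \ B)) * adDiff q (A \ B) S) := by
        rw [hsign]; ring

lemma monotone_insert_trans {f : Finset V → ℝ} (h : ∀ (x : V) (S : Finset V), f S ≤ f (insert x S)) :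
    ∀ {S T : Finset V}, S ⊆ T → f S ≤ f T := by
  have key : ∀ (n : ℕ) (S T : Finset V), (T \ S).card = n → S ⊆ T → f S ≤ f T := by
    intro n
    induction n with
    | zero =>
      intro S T hc hsub
      have hTS0 : T \ S = ∅ := Finset.card_eq_zero.mp hc
      have hTS : T ⊆ S := by
        intro v hv
        by_contra hvS
        exact Finset.eq_empty_iff_forall_notMem.mp hTS0 v (Finset.mem_sdiff.mpr ⟨hv, hvS⟩)
      rw [Finset.Subset.antisymm hsub hTS]
    | succ n ihn =>
      intro S T hc hsub
      have hne : (T \ S).Nonempty := by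
        rw [← Finset.card_pos, hc]; omega
      obtain ⟨x, hx⟩ := hne
      have hxT : x ∈ T := (Finset.mem_sdiff.mp hx).1
      have hxS : x ∉ S := (Finset.mem_sdiff.mp hx).2
      have h2 : insert x S ⊆ T := Finset.insert_subset hxT hsub
      have hcard : (T \ insert x S).card = n := by
        have he : T \ insert x S = (T \ S).erase x := by
          ext v
          simp only [Finset.mem_sdiff, Finset.mem_insert, Finset.mem_erase, not_or]
          tauto
        rw [he, Finset.card_erase_of_mem hx, hc]
        omega
      exact le_trans (h x S) (ihn (insert x S) T hcard h2)
  intro S T hsub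
  exact key _ S T rfl hsub

lemma isADk_insert_le {f : Finset V → ℝ} {k : ℕ} (hk : 1 ≤ k) (hf : IsADk f k)
    (x : V) (S : Finset V) : f S ≤ f (insert x S) := by
  have := hf {x} S (Finset.singleton_nonempty x) (by simpa using hk)
  rw [adDiff_singleton] at this
  norm_num at this
  linarith

lemma isADk_monotone {f : Finset V → ℝ} {k : ℕ} (hk : 1 ≤ k) (hf : IsADk f k) :
    ∀ {S T : Finset V}, S ⊆ T → f S ≤ f T :=
  monotone_insert_trans (isADk_insert_le hk hf)

section Closure

variable {t : V} {ft F : Finset V → ℝ} {k : ℕ}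

/-- the one-step mixture function. -/
def Hfun (ft : Finset V → ℝ) (t : V) (F : Finset V → ℝ) : Finset V → ℝ :=
  fun T => (1 - ft T) * F (T.erase t) + ft T * F (insert t T)

/-- the one-step gap function (part (a)). -/
def Wfun (ft : Finset V → ℝ) (t : V) (F : Finset V → ℝ) : Finset V → ℝ :=
  fun T => (1 - ft T) * (F (insert t T) - F (T.erase t))

/-- the one-step gap function (part (b)). -/
def WfunG (ft : Finset V → ℝ) (t : V) (G : Finset V → ℝ) : Finset V → ℝ :=
  fun T => (1 - ft T) * (G (T.erase t) - G (insert t T))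


/-- `Hfun` ignores the coordinate `t`. -/
lemma Hfun_ignore (hig : ∀ T, ft (insert t T) = ft T) (T : Finset V) :
    Hfun ft t F (insert t T) = Hfun ft t F T := by
  unfold Hfun
  rw [hig, Finset.erase_insert_eq_erase, Finset.insert_idem]

lemma Ffun1_ignore (F : Finset V → ℝ) (T : Finset V) :
    F (insert t (insert t T)) = F (insert t T) := by rw [Finset.insert_idem]

/-- The master formula for the difference of `Hfun`, for `t ∉ A`, `t ∉ S`. -/
lemma adDiff_Hfun (hig : ∀ T, ft (insert t T) = ft T)
    {A S : Finset V} (htA : t ∉ A) (htS : t ∉ S) :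
    adDiff (Hfun ft t F) A S
      = (1 - ft (S ∪ A)) * adDiff F A S + ft (S ∪ A) * adDiff F A (insert t S)
        + ∑ B ∈ A.powerset.erase ∅,
            adDiff ft B (S ∪ (A \ B)) * adDiff F (insert t (A \ B)) S := by
  -- rewrite H as F0e + ft * D
  have hH : ∀ T, Hfun ft t F T = F (T.erase t) + ft T * (F (insert t T) - F (T.erase t)) := by
    intro T; unfold Hfun; ring
  rw [adDiff_congr hH]
  have step1 : adDiff (fun T => F (T.erase t) + ft T * (F (insert t T) - F (T.erase t))) A S
      = adDiff (fun T => F (T.erase t)) A S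
        + adDiff (fun T => ft T * (F (insert t T) - F (T.erase t))) A S := adDiff_add _ _ A S
  rw [step1]
  -- F0e equals F on all relevant arguments
  have hF0 : adDiff (fun T => F (T.erase t)) A S = adDiff F A S := by
    unfold adDiff
    refine Finset.sum_congr rfl fun B _ => ?_
    have htSAB : t ∉ S ∪ (A \ B) := by
      simp only [Finset.mem_union, Finset.mem_sdiff]
      rintro (h | ⟨h, _⟩); exacts [htS h, htA h]
    simp only [Finset.erase_eq_of_notMem htSAB]
  rw [hF0]
  -- Leibniz on ft * D
  rw [adDiff_mul ft (fun T => F (insert t T) - F (T.erase t)) A S]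
  -- rewrite the D-difference as a higher difference of F
  have hD : ∀ B ∈ A.powerset,
      adDiff (fun T => F (insert t T) - F (T.erase t)) (A \ B) S
        = adDiff F (insert t (A \ B)) S := by
    intro B hB
    have htAB : t ∉ A \ B := fun h => htA (Finset.mem_sdiff.mp h).1
    rw [adDiff_insert F htAB S, adDiff_sub]
    have : adDiff (fun T => F (T.erase t)) (A \ B) S = adDiff F (A \ B) S := by
      unfold adDiff
      refine Finset.sum_congr rfl fun B' _ => ?_
      have htX : t ∉ S ∪ ((A \ B) \ B') := by
        simp only [Finset.mem_union, Finset.mem_sdiff]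
        rintro (h | ⟨⟨h, _⟩, _⟩); exacts [htS h, htA h]
      simp only [Finset.erase_eq_of_notMem htX]
    rw [this]
  rw [Finset.sum_congr rfl fun B hB => by rw [hD B hB]]
  -- split off the B = ∅ term
  have hmem : (∅ : Finset V) ∈ A.powerset := Finset.empty_mem_powerset A
  rw [← Finset.sum_erase_add _ _ hmem]
  rw [adDiff_empty, Finset.sdiff_empty]
  -- expand adDiff F (insert t A) S
  have : adDiff F (insert t A) S = adDiff F A (insert t S) - adDiff F A S := by
    rw [adDiff_insert F htA S, adDiff_comp_insert]
  rw [this]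
  ring

lemma adDiff_neg (f : Finset V → ℝ) (A S : Finset V) :
    adDiff (fun T => -(f T)) A S = -adDiff f A S := by
  simp [adDiff, Finset.sum_neg_distrib]

lemma neg_one_pow_add_two (n : ℕ) : (-1 : ℝ) ^ (n + 2) = (-1) ^ n := by
  rw [pow_add]; norm_num

lemma key_split1 (b c : ℕ) (x y : ℝ) :
    (-1 : ℝ) ^ (c + b + 1) * (x * y) = ((-1) ^ (b + 1) * x) * ((-1) ^ (c + 1 + 1) * y) := by
  have h : ((-1 : ℝ)) ^ (b + 1) * (-1) ^ (c + 1 + 1) = (-1) ^ (c + b + 1) := by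
    rw [← pow_add, show (b + 1) + (c + 1 + 1) = (c + b + 1) + 2 from by omega,
      neg_one_pow_add_two]
  calc (-1 : ℝ) ^ (c + b + 1) * (x * y)
      = ((-1) ^ (b + 1) * (-1) ^ (c + 1 + 1)) * (x * y) := by rw [h]
    _ = ((-1) ^ (b + 1) * x) * ((-1) ^ (c + 1 + 1) * y) := by ring

lemma key_split2 (b c : ℕ) (x y : ℝ) :
    (-1 : ℝ) ^ (c + b) * (x * y) = ((-1) ^ (b + 1) * x) * ((-1) ^ (c + 1) * y) := by
  have h : ((-1 : ℝ)) ^ (b + 1) * (-1) ^ (c + 1) = (-1) ^ (c + b) := by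
    rw [← pow_add, show (b + 1) + (c + 1) = (c + b) + 2 from by omega,
      neg_one_pow_add_two]
  calc (-1 : ℝ) ^ (c + b) * (x * y)
      = ((-1) ^ (b + 1) * (-1) ^ (c + 1)) * (x * y) := by rw [h]
    _ = ((-1) ^ (b + 1) * x) * ((-1) ^ (c + 1) * y) := by ring

/-- `D` ignores `t`. -/
lemma Dfun_ignore (F : Finset V → ℝ) (T : Finset V) :
    F (insert t (insert t T)) - F ((insert t T).erase t) = F (insert t T) - F (T.erase t) := by
  rw [Finset.insert_idem, Finset.erase_insert_eq_erase]

/-- difference of `D` is a one-higher difference of `F`. -/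
lemma adDiff_D (F : Finset V → ℝ) {A S : Finset V} (htA : t ∉ A) (htS : t ∉ S) :
    adDiff (fun T => F (insert t T) - F (T.erase t)) A S = adDiff F (insert t A) S := by
  rw [adDiff_insert F htA S, adDiff_sub]
  have : adDiff (fun T => F (T.erase t)) A S = adDiff F A S := by
    unfold adDiff
    refine Finset.sum_congr rfl fun B _ => ?_
    have htX : t ∉ S ∪ (A \ B) := by
      simp only [Finset.mem_union, Finset.mem_sdiff]
      rintro (h | ⟨h, _⟩); exacts [htS h, htA h]
    simp only [Finset.erase_eq_of_notMem htX]
  rw [this]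

lemma isADk_comp_insert {k : ℕ} (hFad : IsADk F k) : IsADk (fun T => F (insert t T)) k := by
  intro A S hne hAk
  by_cases htA : t ∈ A
  · rw [adDiff_ignore (fun T => by simp [Finset.insert_idem]) htA]
    simp
  · rw [adDiff_comp_insert]
    exact hFad A (insert t S) hne hAk

lemma cmk_comp_insert {G : Finset V → ℝ} {j : ℕ} (hG : cmk G j) :
    cmk (fun T => G (insert t T)) j := by
  intro A S hAj
  by_cases htA : t ∈ A
  · rw [adDiff_ignore (fun T => by simp [Finset.insert_idem]) htA]
    simp
  · rw [adDiff_comp_insert]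
    exact hG A (insert t S) hAj

lemma cmk_one_sub {k : ℕ} (hft1 : ∀ T, ft T ≤ 1) (hftad : IsADk ft k) :
    cmk (fun T => 1 - ft T) k := by
  intro A S hA
  rcases Finset.eq_empty_or_nonempty A with rfl | hne
  · rw [adDiff_empty]
    simp only [Finset.card_empty, pow_zero, one_mul]
    linarith [hft1 S]
  · have hconst : adDiff (fun _ : Finset V => (1 : ℝ)) A S = 0 := by
      rw [adDiff_const_on (fun B _ => rfl)]
      simp [hne.ne_empty]
    have heq : adDiff (fun T => 1 - ft T) A S = -adDiff ft A S := by
      rw [adDiff_sub (fun _ => (1 : ℝ)) ft A S, hconst]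
      ring
    rw [heq]
    have := hftad A S hne hA
    have key : (-1 : ℝ) ^ A.card * -adDiff ft A S = (-1) ^ (A.card + 1) * adDiff ft A S := by
      rw [pow_succ]; ring
    rw [key]
    exact this

lemma cmk_Dfun {k : ℕ} (hk : 1 ≤ k) (hFad : IsADk F k)
    (hFmono : ∀ {S T : Finset V}, S ⊆ T → F S ≤ F T) :
    cmk (fun T => F (insert t T) - F (T.erase t)) (k - 1) := by
  intro A S hA
  by_cases htA : t ∈ A
  · rw [adDiff_ignore (fun T => Dfun_ignore F T) htA]
    simp
  · rw [adDiff_erase_right (ignore_insert_imp_erase (fun T => Dfun_ignore F T)) htA S]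
    set S' := S.erase t with hS'
    have htS' : t ∉ S' := Finset.notMem_erase t S
    rw [adDiff_D F htA htS']
    rcases Finset.eq_empty_or_nonempty A with rfl | hne
    · simp only [Finset.card_empty, pow_zero, one_mul]
      rw [show insert t (∅ : Finset V) = {t} from rfl, adDiff_singleton]
      have : S' ⊆ insert t S' := Finset.subset_insert t S'
      have h2 : F S' ≤ F (insert t S') := hFmono this
      linarith
    · have hins : (insert t A).card = A.card + 1 := Finset.card_insert_of_notMem htA
      have hsign : (-1 : ℝ) ^ A.card = (-1) ^ ((insert t A).card + 1) := by
        rw [hins, ← neg_one_pow_add_two A.card]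
      rw [hsign]
      exact hFad (insert t A) S' (Finset.insert_nonempty t A) (by omega)

lemma cmk_negDG {G : Finset V → ℝ} {j : ℕ} (hj : 1 ≤ j) (hG : cmk G j) :
    cmk (fun T => G (T.erase t) - G (insert t T)) (j - 1) := by
  intro A S hA
  by_cases htA : t ∈ A
  · rw [adDiff_ignore (fun T => by
      rw [Finset.insert_idem, Finset.erase_insert_eq_erase]) htA]
    simp
  · have hig' : ∀ T : Finset V, (fun T => G (T.erase t) - G (insert t T)) (insert t T)
        = (fun T => G (T.erase t) - G (insert t T)) T := by
      intro T
      simp only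
      rw [Finset.insert_idem, Finset.erase_insert_eq_erase]
    rw [adDiff_erase_right (ignore_insert_imp_erase hig') htA S]
    set S' := S.erase t with hS'
    have htS' : t ∉ S' := Finset.notMem_erase t S
    have hneg : adDiff (fun T => G (T.erase t) - G (insert t T)) A S'
        = -adDiff (fun T => G (insert t T) - G (T.erase t)) A S' := by
      rw [← adDiff_neg]
      exact adDiff_congr (fun T => by ring) A S'
    rw [hneg, adDiff_D G htA htS']
    have hins : (insert t A).card = A.card + 1 := Finset.card_insert_of_notMem htA
    have key : (-1 : ℝ) ^ A.card * -adDiff G (insert t A) S'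
        = (-1) ^ (insert t A).card * adDiff G (insert t A) S' := by
      rw [hins, pow_succ]; ring
    rw [key]
    exact hG (insert t A) S' (by omega)

lemma cmk_Wfun {k : ℕ} (hk : 1 ≤ k) (hft1 : ∀ T, ft T ≤ 1) (hftad : IsADk ft k)
    (hFad : IsADk F k) (hFmono : ∀ {S T : Finset V}, S ⊆ T → F S ≤ F T) :
    cmk (Wfun ft t F) (k - 1) :=
  cmk_mul (cmk_mono (Nat.sub_le k 1) (cmk_one_sub hft1 hftad))
    (cmk_Dfun hk hFad hFmono)

lemma cmk_WfunG {G : Finset V → ℝ} {j k : ℕ} (hj : 1 ≤ j) (hjk : j ≤ k)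
    (hft1 : ∀ T, ft T ≤ 1) (hftad : IsADk ft k) (hG : cmk G j) :
    cmk (WfunG ft t G) (j - 1) := by
  have h1 : cmk (fun T => 1 - ft T) (j - 1) :=
    cmk_mono (by omega) (cmk_one_sub hft1 hftad)
  exact cmk_mul h1 (cmk_negDG hj hG)

lemma Hfun_nonneg (hft0 : ∀ T, 0 ≤ ft T) (hft1 : ∀ T, ft T ≤ 1)
    (hF0 : ∀ T, 0 ≤ F T) (T : Finset V) : 0 ≤ Hfun ft t F T := by
  unfold Hfun
  have := hft0 T; have := hft1 T; have := hF0 (T.erase t); have := hF0 (insert t T)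
  nlinarith

lemma Wfun_nonneg (hft1 : ∀ T, ft T ≤ 1)
    (hFmono : ∀ {S T : Finset V}, S ⊆ T → F S ≤ F T) (T : Finset V) :
    0 ≤ Wfun ft t F T := by
  unfold Wfun
  have h1 := hft1 T
  have h2 : F (T.erase t) ≤ F (insert t T) :=
    hFmono ((Finset.erase_subset t T).trans (Finset.subset_insert t T))
  nlinarith

lemma WfunG_nonneg {G : Finset V → ℝ} {j : ℕ} (hj : 1 ≤ j) (hft1 : ∀ T, ft T ≤ 1)
    (hG : cmk G j) (T : Finset V) : 0 ≤ WfunG ft t G T := by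
  unfold WfunG
  have h1 := hft1 T
  have h2 : G (insert t T) - G (T.erase t) ≤ 0 := by
    have := hG {t} (T.erase t) (by simpa using hj)
    rw [adDiff_singleton] at this
    simp only [Finset.card_singleton, pow_one] at this
    have hi : insert t (T.erase t) = insert t T := by
      ext v
      simp only [Finset.mem_insert, Finset.mem_erase]
      constructor
      · rintro (h | ⟨_, h⟩); exacts [Or.inl h, Or.inr h]
      · rintro (h | h)
        · exact Or.inl h
        · by_cases hv : v = t
          · exact Or.inl hv
          · exact Or.inr ⟨hv, h⟩
    rw [hi] at this
    linarith
  nlinarith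

/-- Part (a) sign lemma: `Hfun` is AD-k. -/
lemma isADk_Hfun {k : ℕ} (hk : 1 ≤ k) (hig : ∀ T, ft (insert t T) = ft T)
    (hft1 : ∀ T, ft T ≤ 1) (hft0 : ∀ T, 0 ≤ ft T) (hftad : IsADk ft k)
    (hFad : IsADk F k) : IsADk (Hfun ft t F) k := by
  intro A S hne hAk
  by_cases htA : t ∈ A
  · rw [adDiff_ignore (Hfun_ignore hig) htA]
    simp
  · rw [adDiff_erase_right (ignore_insert_imp_erase (Hfun_ignore hig)) htA S]
    set S' := S.erase t with hS'
    have htS' : t ∉ S' := Finset.notMem_erase t S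
    rw [adDiff_Hfun hig htA htS', mul_add, mul_add]
    have h1 : 0 ≤ (-1 : ℝ) ^ (A.card + 1) * ((1 - ft (S' ∪ A)) * adDiff F A S') := by
      have ha := hFad A S' hne hAk
      have hb := hft1 (S' ∪ A)
      nlinarith
    have h2 : 0 ≤ (-1 : ℝ) ^ (A.card + 1) * (ft (S' ∪ A) * adDiff F A (insert t S')) := by
      have ha := hFad A (insert t S') hne hAk
      have hb := hft0 (S' ∪ A)
      nlinarith
    have h3 : 0 ≤ (-1 : ℝ) ^ (A.card + 1) *
        ∑ B ∈ A.powerset.erase ∅,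
          adDiff ft B (S' ∪ (A \ B)) * adDiff F (insert t (A \ B)) S' := by
      rw [Finset.mul_sum]
      refine Finset.sum_nonneg fun B hB => ?_
      have hBp : B ∈ A.powerset := Finset.mem_of_mem_erase hB
      have hBsub : B ⊆ A := Finset.mem_powerset.mp hBp
      have hBne : B.Nonempty :=
        Finset.nonempty_of_ne_empty (Finset.ne_of_mem_erase hB)
      have hBcard : 1 ≤ B.card := Finset.card_pos.mpr hBne
      have hcards : (A \ B).card + B.card = A.card := Finset.card_sdiff_add_card_eq_card hBsub
      have htAB : t ∉ A \ B := fun h => htA (Finset.mem_sdiff.mp h).1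
      have hinsc : (insert t (A \ B)).card = (A \ B).card + 1 :=
        Finset.card_insert_of_notMem htAB
      have hX : 0 ≤ (-1 : ℝ) ^ (B.card + 1) * adDiff ft B (S' ∪ (A \ B)) :=
        hftad B (S' ∪ (A \ B)) hBne (le_trans (Finset.card_le_card hBsub) hAk)
      have hY : 0 ≤ (-1 : ℝ) ^ ((A \ B).card + 1 + 1) * adDiff F (insert t (A \ B)) S' := by
        have := hFad (insert t (A \ B)) S' (Finset.insert_nonempty t _) (by omega)
        rwa [hinsc] at this
      have key : (-1 : ℝ) ^ (A.card + 1) *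
          (adDiff ft B (S' ∪ (A \ B)) * adDiff F (insert t (A \ B)) S')
          = ((-1 : ℝ) ^ (B.card + 1) * adDiff ft B (S' ∪ (A \ B)))
            * ((-1 : ℝ) ^ ((A \ B).card + 1 + 1) * adDiff F (insert t (A \ B)) S') := by
        rw [← hcards]
        exact key_split1 B.card (A \ B).card _ _
      rw [key]
      exact mul_nonneg hX hY
    linarith

/-- Part (b) sign lemma: `Hfun` preserves `cmk`. -/
lemma cmk_Hfun {G : Finset V → ℝ} {j k : ℕ} (hjk : j ≤ k)
    (hig : ∀ T, ft (insert t T) = ft T)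
    (hft1 : ∀ T, ft T ≤ 1) (hft0 : ∀ T, 0 ≤ ft T) (hftad : IsADk ft k)
    (hG : cmk G j) : cmk (Hfun ft t G) j := by
  intro A S hAj
  by_cases htA : t ∈ A
  · rw [adDiff_ignore (Hfun_ignore hig) htA]
    simp
  · rw [adDiff_erase_right (ignore_insert_imp_erase (Hfun_ignore hig)) htA S]
    set S' := S.erase t with hS'
    have htS' : t ∉ S' := Finset.notMem_erase t S
    rw [adDiff_Hfun hig htA htS', mul_add, mul_add]
    have h1 : 0 ≤ (-1 : ℝ) ^ A.card * ((1 - ft (S' ∪ A)) * adDiff G A S') := by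
      have ha := hG A S' hAj
      have hb := hft1 (S' ∪ A)
      nlinarith
    have h2 : 0 ≤ (-1 : ℝ) ^ A.card * (ft (S' ∪ A) * adDiff G A (insert t S')) := by
      have ha := hG A (insert t S') hAj
      have hb := hft0 (S' ∪ A)
      nlinarith
    have h3 : 0 ≤ (-1 : ℝ) ^ A.card *
        ∑ B ∈ A.powerset.erase ∅,
          adDiff ft B (S' ∪ (A \ B)) * adDiff G (insert t (A \ B)) S' := by
      rw [Finset.mul_sum]
      refine Finset.sum_nonneg fun B hB => ?_
      have hBp : B ∈ A.powerset := Finset.mem_of_mem_erase hB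
      have hBsub : B ⊆ A := Finset.mem_powerset.mp hBp
      have hBne : B.Nonempty :=
        Finset.nonempty_of_ne_empty (Finset.ne_of_mem_erase hB)
      have hBcard : 1 ≤ B.card := Finset.card_pos.mpr hBne
      have hcards : (A \ B).card + B.card = A.card := Finset.card_sdiff_add_card_eq_card hBsub
      have htAB : t ∉ A \ B := fun h => htA (Finset.mem_sdiff.mp h).1
      have hinsc : (insert t (A \ B)).card = (A \ B).card + 1 :=
        Finset.card_insert_of_notMem htAB
      have hX : 0 ≤ (-1 : ℝ) ^ (B.card + 1) * adDiff ft B (S' ∪ (A \ B)) :=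
        hftad B (S' ∪ (A \ B)) hBne (le_trans (le_trans (Finset.card_le_card hBsub) hAj) hjk)
      have hY : 0 ≤ (-1 : ℝ) ^ ((A \ B).card + 1) * adDiff G (insert t (A \ B)) S' := by
        have := hG (insert t (A \ B)) S' (by omega)
        rwa [hinsc] at this
      have key : (-1 : ℝ) ^ A.card *
          (adDiff ft B (S' ∪ (A \ B)) * adDiff G (insert t (A \ B)) S')
          = ((-1 : ℝ) ^ (B.card + 1) * adDiff ft B (S' ∪ (A \ B)))
            * ((-1 : ℝ) ^ ((A \ B).card + 1) * adDiff G (insert t (A \ B)) S') := by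
        rw [← hcards]
        exact key_split2 B.card (A \ B).card _ _
      rw [key]
      exact mul_nonneg hX hY
    linarith

end Closure

end ADAux


-- ## Section 3 : cascade dynamics

namespace GTAux

open ADAux


lemma cascade_succ (gt : GTInstance V) (θ : V → ℝ) (S : Finset V) (s : ℕ) :
    cascade gt θ S (s + 1)
      = cascade gt θ S s ∪ Finset.univ.filter fun v => θ v ≤ gt.f v (cascade gt θ S s) := rfl

lemma cascade_subset_succ (gt : GTInstance V) (θ : V → ℝ) (S : Finset V) (s : ℕ) :
    cascade gt θ S s ⊆ cascade gt θ S (s + 1) :=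
  Finset.subset_union_left

lemma cascade_mono (gt : GTInstance V) (θ : V → ℝ) (S : Finset V) {s m : ℕ} (h : s ≤ m) :
    cascade gt θ S s ⊆ cascade gt θ S m := by
  induction m with
  | zero => simp_all
  | succ m ih =>
    rcases Nat.lt_or_ge s (m + 1) with h' | h'
    · exact (ih (by omega)).trans (cascade_subset_succ gt θ S m)
    · have : s = m + 1 := by omega
      subst this
      rfl

lemma seed_subset_cascade (gt : GTInstance V) (θ : V → ℝ) (S : Finset V) (s : ℕ) :
    S ⊆ cascade gt θ S s :=
  cascade_mono gt θ S (Nat.zero_le s)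

lemma cascade_stab (gt : GTInstance V) (θ : V → ℝ) (S : Finset V) {s : ℕ}
    (h : cascade gt θ S (s + 1) = cascade gt θ S s) :
    ∀ m, s ≤ m → cascade gt θ S m = cascade gt θ S s := by
  intro m hm
  induction m with
  | zero =>
    have : s = 0 := by omega
    subst this; rfl
  | succ m ih =>
    rcases Nat.lt_or_ge s (m + 1) with h' | h'
    · have hm' : cascade gt θ S m = cascade gt θ S s := ih (by omega)
      rw [cascade_succ, hm', ← cascade_succ, h]
    · have : s = m + 1 := by omega
      subst this; rfl

lemma cascade_or (gt : GTInstance V) (θ : V → ℝ) (S : Finset V) (s : ℕ) :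
    cascade gt θ S (s + 1) = cascade gt θ S s ∨ s + 1 ≤ (cascade gt θ S (s + 1)).card := by
  induction s with
  | zero =>
    by_cases h : cascade gt θ S (0 + 1) = cascade gt θ S 0
    · exact Or.inl h
    · right
      have hss : cascade gt θ S 0 ⊂ cascade gt θ S (0 + 1) :=
        Finset.ssubset_iff_subset_ne.mpr ⟨cascade_subset_succ gt θ S 0, Ne.symm h⟩
      have := Finset.card_lt_card hss
      omega
  | succ s ih =>
    rcases ih with h | h
    · left
      have h2 := cascade_stab gt θ S h (s + 1 + 1) (by omega)
      rw [h2, h]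
    · by_cases h2 : cascade gt θ S (s + 1 + 1) = cascade gt θ S (s + 1)
      · exact Or.inl h2
      · right
        have hss : cascade gt θ S (s + 1) ⊂ cascade gt θ S (s + 1 + 1) :=
          Finset.ssubset_iff_subset_ne.mpr ⟨cascade_subset_succ gt θ S (s + 1), Ne.symm h2⟩
        have := Finset.card_lt_card hss
        omega

lemma final_fix (gt : GTInstance V) (θ : V → ℝ) (S : Finset V) :
    cascade gt θ S (Fintype.card V + 1) = cascade gt θ S (Fintype.card V) := by
  rcases cascade_or gt θ S (Fintype.card V) with h | h
  · exact h
  · exfalso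
    have := Finset.card_le_univ (cascade gt θ S (Fintype.card V + 1))
    omega

lemma cascade_eq_final (gt : GTInstance V) (θ : V → ℝ) (S : Finset V) {m : ℕ}
    (hm : Fintype.card V ≤ m) : cascade gt θ S m = finalSet gt θ S :=
  cascade_stab gt θ S (final_fix gt θ S) m hm

lemma cascade_subset_final (gt : GTInstance V) (θ : V → ℝ) (S : Finset V) (s : ℕ) :
    cascade gt θ S s ⊆ finalSet gt θ S := by
  rcases Nat.le_total s (Fintype.card V) with h | h
  · exact cascade_mono gt θ S h
  · rw [cascade_eq_final gt θ S h]

-- ## dropNode and comparison lemmas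

/-- the instance `gt` with the threshold function of `t` replaced by `0`. -/
def dropNode (gt : GTInstance V) (t : V) : GTInstance V where
  E := gt.E
  f := Function.update gt.f t (fun _ => 0)
  f_nonneg := by
    intro v S
    by_cases hv : v = t
    · subst hv; simp [Function.update_self]
    · simp [Function.update_of_ne hv, gt.f_nonneg]
  f_le_one := by
    intro v S
    by_cases hv : v = t
    · subst hv; simp [Function.update_self]
    · simp [Function.update_of_ne hv, gt.f_le_one]
  f_mono := by
    intro v
    by_cases hv : v = t
    · subst hv; simp only [Function.update_self]; exact monotone_const
    · simp only [Function.update_of_ne hv]; exact gt.f_mono v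
  f_empty := by
    intro v
    by_cases hv : v = t
    · subst hv; simp [Function.update_self]
    · simp [Function.update_of_ne hv, gt.f_empty]
  f_local := by
    intro v S
    by_cases hv : v = t
    · subst hv; simp [Function.update_self]
    · simp only [Function.update_of_ne hv]; exact gt.f_local v S

lemma dropNode_E (gt : GTInstance V) (t : V) : (dropNode gt t).E = gt.E := rfl

lemma dropNode_f_same (gt : GTInstance V) (t : V) (T : Finset V) :
    (dropNode gt t).f t T = 0 := by
  simp [dropNode, Function.update_self]

lemma dropNode_f_noteq (gt : GTInstance V) {t v : V} (hv : v ≠ t) :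
    (dropNode gt t).f v = gt.f v := by
  simp [dropNode, Function.update_of_ne hv]

section Compare

variable {gt : GTInstance V} {t : V}

/-- if `t ∈ S`, the two cascades agree exactly. -/
lemma cascade_drop_of_mem (θ : V → ℝ) {S : Finset V} (htS : t ∈ S) (s : ℕ) :
    cascade gt θ S s = cascade (dropNode gt t) θ S s := by
  induction s with
  | zero => rfl
  | succ s ih =>
    rw [cascade_succ, cascade_succ, ← ih]
    have htC : t ∈ cascade gt θ S s := seed_subset_cascade gt θ S s htS
    ext v
    by_cases hv : v = t
    · subst hv
      simp [Finset.mem_union, htC]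
    · simp only [Finset.mem_union, Finset.mem_filter, Finset.mem_univ, true_and,
        dropNode_f_noteq gt hv]

/-- if `t ∉ S` and `θ t > 0`, the dropped cascade is the erased cascade. -/
lemma cascade_drop_of_not_mem
    (hsink : ∀ w, w ≠ t → ∀ T : Finset V, gt.f w T = gt.f w (T.erase t))
    (θ : V → ℝ) {S : Finset V} (htS : t ∉ S) (hθt : 0 < θ t) (s : ℕ) :
    (cascade gt θ S s).erase t = cascade (dropNode gt t) θ S s := by
  induction s with
  | zero => exact Finset.erase_eq_of_notMem htS
  | succ s ih =>
    rw [cascade_succ, cascade_succ, ← ih]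
    ext v
    simp only [Finset.mem_erase, Finset.mem_union, Finset.mem_filter, Finset.mem_univ, true_and]
    by_cases hv : v = t
    · subst hv
      rw [dropNode_f_same]
      simp [not_le.mpr hθt]
    · rw [dropNode_f_noteq gt hv, ← hsink v hv ((cascade gt θ S s))]
      simp only [Finset.mem_erase, ne_eq, hv, not_false_eq_true, true_and]

lemma not_mem_cascade_drop
    (hsink : ∀ w, w ≠ t → ∀ T : Finset V, gt.f w T = gt.f w (T.erase t))
    (θ : V → ℝ) {S : Finset V} (htS : t ∉ S) (hθt : 0 < θ t) (s : ℕ) :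
    t ∉ cascade (dropNode gt t) θ S s := by
  rw [← cascade_drop_of_not_mem hsink θ htS hθt s]
  exact Finset.notMem_erase t _

/-- inserting the (inactive) node `t` into the seed set of the dropped instance
just inserts it into every cascade set. -/
lemma cascade_drop_insert
    (hsink : ∀ w, w ≠ t → ∀ T : Finset V, gt.f w T = gt.f w (T.erase t))
    (θ : V → ℝ) (X : Finset V) (hθt : 0 < θ t) (s : ℕ) :
    cascade (dropNode gt t) θ (insert t X) s = insert t (cascade (dropNode gt t) θ X s) := by
  induction s with
  | zero => rfl
  | succ s ih =>
    rw [cascade_succ, cascade_succ, ih]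
    ext v
    simp only [Finset.mem_union, Finset.mem_insert, Finset.mem_filter, Finset.mem_univ, true_and]
    by_cases hv : v = t
    · subst hv; simp
    · simp only [hv, false_or]
      have he : (dropNode gt t).f v (insert t (cascade (dropNode gt t) θ X s))
          = (dropNode gt t).f v (cascade (dropNode gt t) θ X s) := by
        rw [dropNode_f_noteq gt hv,
          hsink v hv (insert t (cascade (dropNode gt t) θ X s)),
          Finset.erase_insert_eq_erase, ← hsink v hv]
      rw [he]

/-- the dropped cascade does not depend on the coordinate `t`. -/
lemma cascade_drop_update (θ : V → ℝ) (S : Finset V) {y : ℝ} (hθt : 0 < θ t) (hy : 0 < y)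
    (s : ℕ) :
    cascade (dropNode gt t) (Function.update θ t y) S s = cascade (dropNode gt t) θ S s := by
  induction s with
  | zero => rfl
  | succ s ih =>
    rw [cascade_succ, cascade_succ, ih]
    ext v
    simp only [Finset.mem_union, Finset.mem_filter, Finset.mem_univ, true_and]
    by_cases hv : v = t
    · subst hv
      rw [dropNode_f_same, Function.update_self]
      simp [not_le.mpr hθt, not_le.mpr hy]
    · rw [Function.update_of_ne hv]

/-- membership of `t` in the final set, for `t ∉ S`. -/
lemma mem_final_iff
    (hsink : ∀ w, w ≠ t → ∀ T : Finset V, gt.f w T = gt.f w (T.erase t))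
    (hloct : ∀ T : Finset V, gt.f t T = gt.f t (T.erase t))
    (θ : V → ℝ) {S : Finset V} (htS : t ∉ S) (hθt : 0 < θ t) :
    t ∈ finalSet gt θ S ↔ θ t ≤ gt.f t (finalSet (dropNode gt t) θ S) := by
  have herase : (finalSet gt θ S).erase t = finalSet (dropNode gt t) θ S :=
    cascade_drop_of_not_mem hsink θ htS hθt _
  have hfinal : gt.f t (finalSet gt θ S) = gt.f t (finalSet (dropNode gt t) θ S) := by
    rw [hloct, herase]
  constructor
  · intro ht
    rw [← hfinal]
    have key : ∀ s, t ∈ cascade gt θ S s → θ t ≤ gt.f t (finalSet gt θ S) := by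
      intro s
      induction s with
      | zero => intro h; exact absurd h htS
      | succ s ih =>
        intro h
        rw [cascade_succ] at h
        rcases Finset.mem_union.mp h with h | h
        · exact ih h
        · have := (Finset.mem_filter.mp h).2
          exact this.trans (gt.f_mono t (cascade_subset_final gt θ S s))
    exact key _ ht
  · intro h
    have : t ∈ cascade gt θ S (Fintype.card V + 1) := by
      rw [cascade_succ]
      refine Finset.mem_union.mpr (Or.inr ?_)
      refine Finset.mem_filter.mpr ⟨Finset.mem_univ t, ?_⟩
      rw [← hfinal] at h
      exact h
    rwa [final_fix gt θ S] at this

end Compare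


-- ## Section 4 : measurability

open MeasureTheory
open scoped ENNReal

lemma measurableSet_cascade_eq (gt : GTInstance V) (S : Finset V) (s : ℕ) (T : Finset V) :
    MeasurableSet {θ : V → ℝ | cascade gt θ S s = T} := by
  induction s generalizing T with
  | zero =>
    by_cases h : S = T
    · subst h
      have : {θ : V → ℝ | cascade gt θ S 0 = S} = Set.univ := by
        ext θ
        simp only [Set.mem_setOf_eq, Set.mem_univ, iff_true]
        rfl
      rw [this]; exact MeasurableSet.univ
    · have : {θ : V → ℝ | cascade gt θ S 0 = T} = ∅ := by
        ext θ
        simp only [Set.mem_setOf_eq, Set.mem_empty_iff_false, iff_false]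
        exact fun hc => h hc
      rw [this]; exact MeasurableSet.empty
  | succ s ih =>
    have hdecomp : {θ : V → ℝ | cascade gt θ S (s + 1) = T}
        = ⋃ T' : Finset V, ({θ : V → ℝ | cascade gt θ S s = T'}
            ∩ {θ : V → ℝ | T' ∪ Finset.univ.filter (fun v => θ v ≤ gt.f v T') = T}) := by
      ext θ
      simp only [Set.mem_iUnion, Set.mem_inter_iff, Set.mem_setOf_eq]
      constructor
      · intro h
        exact ⟨cascade gt θ S s, rfl, by rw [← h]; rfl⟩
      · rintro ⟨T', h1, h2⟩
        rw [cascade_succ, h1]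
        exact h2
    rw [hdecomp]
    refine MeasurableSet.iUnion fun T' => (ih T').inter ?_
    have hstep : {θ : V → ℝ | T' ∪ Finset.univ.filter (fun v => θ v ≤ gt.f v T') = T}
        = ⋂ v : V, {θ : V → ℝ | (v ∈ T' ∨ θ v ≤ gt.f v T') ↔ v ∈ T} := by
      ext θ
      simp only [Set.mem_iInter, Set.mem_setOf_eq, Finset.ext_iff, Finset.mem_union,
        Finset.mem_filter, Finset.mem_univ, true_and]
    rw [hstep]
    refine MeasurableSet.iInter fun v => ?_
    by_cases hvT : v ∈ T
    · by_cases hvT' : v ∈ T'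
      · have : {θ : V → ℝ | (v ∈ T' ∨ θ v ≤ gt.f v T') ↔ v ∈ T} = Set.univ := by
          ext θ; simp [hvT, hvT']
        rw [this]; exact MeasurableSet.univ
      · have : {θ : V → ℝ | (v ∈ T' ∨ θ v ≤ gt.f v T') ↔ v ∈ T}
            = {θ : V → ℝ | θ v ≤ gt.f v T'} := by
          ext θ; simp [hvT, hvT']
        rw [this]
        exact measurableSet_le (measurable_pi_apply v) measurable_const
    · by_cases hvT' : v ∈ T'
      · have : {θ : V → ℝ | (v ∈ T' ∨ θ v ≤ gt.f v T') ↔ v ∈ T} = ∅ := by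
          ext θ; simp [hvT, hvT']
        rw [this]; exact MeasurableSet.empty
      · have : {θ : V → ℝ | (v ∈ T' ∨ θ v ≤ gt.f v T') ↔ v ∈ T}
            = {θ : V → ℝ | θ v ≤ gt.f v T'}ᶜ := by
          ext θ; simp [hvT, hvT']
        rw [this]
        exact (measurableSet_le (measurable_pi_apply v) measurable_const).compl

lemma measurableSet_finalSet_eq (gt : GTInstance V) (S T : Finset V) :
    MeasurableSet {θ : V → ℝ | finalSet gt θ S = T} :=
  measurableSet_cascade_eq gt S _ T

lemma measurableSet_mem_finalSet (gt : GTInstance V) (S : Finset V) (v : V) :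
    MeasurableSet {θ : V → ℝ | v ∈ finalSet gt θ S} := by
  have : {θ : V → ℝ | v ∈ finalSet gt θ S}
      = ⋃ T : Finset V, ⋃ (_ : v ∈ T), {θ : V → ℝ | finalSet gt θ S = T} := by
    ext θ
    simp only [Set.mem_iUnion, Set.mem_setOf_eq]
    constructor
    · intro h; exact ⟨finalSet gt θ S, h, rfl⟩
    · rintro ⟨T, hv, hT⟩; rw [hT]; exact hv
  rw [this]
  exact MeasurableSet.iUnion fun T => MeasurableSet.iUnion fun _ =>
    measurableSet_finalSet_eq gt S T

lemma measurable_comp_final (gt : GTInstance V) (S : Finset V) (h : Finset V → ℝ≥0∞) :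
    Measurable fun θ : V → ℝ => h (finalSet gt θ S) := by
  have hrw : (fun θ : V → ℝ => h (finalSet gt θ S))
      = fun θ => ∑ T : Finset V,
          Set.indicator {θ' : V → ℝ | finalSet gt θ' S = T} (fun _ => h T) θ := by
    funext θ
    rw [Finset.sum_eq_single (finalSet gt θ S)]
    · rw [Set.indicator_of_mem (show θ ∈ {θ' : V → ℝ | finalSet gt θ' S = finalSet gt θ S}
        from rfl)]
    · intro T _ hT
      refine Set.indicator_of_notMem ?_ _
      intro hmem
      exact hT (Set.mem_setOf_eq ▸ hmem).symm
    · intro h'; exact absurd (Finset.mem_univ _) h'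
  rw [hrw]
  exact Finset.measurable_sum _ fun T _ =>
    measurable_const.indicator (measurableSet_finalSet_eq gt S T)

lemma measurable_comp_final_real (gt : GTInstance V) (S : Finset V) (h : Finset V → ℝ) :
    Measurable fun θ : V → ℝ => h (finalSet gt θ S) := by
  have hrw : (fun θ : V → ℝ => h (finalSet gt θ S))
      = fun θ => ∑ T : Finset V,
          Set.indicator {θ' : V → ℝ | finalSet gt θ' S = T} (fun _ => h T) θ := by
    funext θ
    rw [Finset.sum_eq_single (finalSet gt θ S)]
    · rw [Set.indicator_of_mem (show θ ∈ {θ' : V → ℝ | finalSet gt θ' S = finalSet gt θ S}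
        from rfl)]
    · intro T _ hT
      refine Set.indicator_of_notMem ?_ _
      intro hmem
      exact hT (Set.mem_setOf_eq ▸ hmem).symm
    · intro h'; exact absurd (Finset.mem_univ _) h'
  rw [hrw]
  exact Finset.measurable_sum _ fun T _ =>
    measurable_const.indicator (measurableSet_finalSet_eq gt S T)

lemma measurable_update_one (t : V) :
    Measurable fun θ : V → ℝ => Function.update θ t (1 : ℝ) := by
  apply measurable_pi_lambda
  intro v
  by_cases hv : v = t
  · have : (fun θ : V → ℝ => Function.update θ t (1 : ℝ) v) = fun _ => (1 : ℝ) := by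
      funext θ; rw [hv, Function.update_self]
    rw [this]; exact measurable_const
  · have : (fun θ : V → ℝ => Function.update θ t (1 : ℝ) v) = fun θ => θ v := by
      funext θ; rw [Function.update_of_ne hv]
    rw [this]; exact measurable_pi_apply v

-- ## Section 5 : measure lemmas

instance cube_factor_prob : IsProbabilityMeasure (volume.restrict (Set.Icc (0:ℝ) 1)) := by
  constructor
  rw [Measure.restrict_apply_univ, Real.volume_Icc]
  norm_num

instance cube_prob : IsProbabilityMeasure (cubeMeasure V) := by
  unfold cubeMeasure
  infer_instance

lemma ae_pos : ∀ᵐ θ ∂(cubeMeasure V), ∀ v : V, 0 < θ v := by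
  rw [MeasureTheory.ae_all_iff]
  intro v
  rw [MeasureTheory.ae_iff]
  have hset : {θ : V → ℝ | ¬ 0 < θ v} = Function.eval v ⁻¹' (Set.Iic 0) := by
    ext θ; simp [not_lt]
  rw [hset]
  unfold cubeMeasure
  apply Measure.pi_eval_preimage_null
  rw [Measure.restrict_apply measurableSet_Iic]
  have hseteq : Set.Iic (0:ℝ) ∩ Set.Icc 0 1 = {0} := by
    ext x
    simp only [Set.mem_inter_iff, Set.mem_Iic, Set.mem_Icc, Set.mem_singleton_iff]
    constructor
    · rintro ⟨h1, h2, h3⟩; linarith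
    · rintro rfl; norm_num
  rw [hseteq]
  exact Real.volume_singleton

lemma inner_calc (a : ℝ) (h0 : 0 ≤ a) (h1 : a ≤ 1) (p q : ℝ≥0∞) :
    ∫⁻ y, (if y ≤ a then p else q) ∂(volume.restrict (Set.Icc (0:ℝ) 1))
      = ENNReal.ofReal a * p + ENNReal.ofReal (1 - a) * q := by
  have hsplit : (fun y : ℝ => if y ≤ a then p else q)
      = fun y => Set.indicator (Set.Iic a) (fun _ => p) y
          + Set.indicator (Set.Iic a)ᶜ (fun _ => q) y := by
    funext y
    by_cases h : y ≤ a
    · rw [Set.indicator_of_mem (Set.mem_Iic.mpr h), Set.indicator_of_notMem (by simp [h]),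
        if_pos h, add_zero]
    · rw [Set.indicator_of_notMem (by simpa using h), Set.indicator_of_mem
        (by simp only [Set.mem_compl_iff, Set.mem_Iic]; exact h), if_neg h, zero_add]
  rw [hsplit]
  rw [lintegral_add_left (measurable_const.indicator measurableSet_Iic)]
  rw [lintegral_indicator_const measurableSet_Iic,
    lintegral_indicator_const measurableSet_Iic.compl]
  have e1 : (volume.restrict (Set.Icc (0:ℝ) 1)) (Set.Iic a) = ENNReal.ofReal a := by
    rw [Measure.restrict_apply measurableSet_Iic]
    have : Set.Iic a ∩ Set.Icc (0:ℝ) 1 = Set.Icc 0 a := by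
      ext x
      simp only [Set.mem_inter_iff, Set.mem_Iic, Set.mem_Icc]
      constructor
      · rintro ⟨hx, hx0, _⟩; exact ⟨hx0, hx⟩
      · rintro ⟨hx0, hx⟩; exact ⟨hx, hx0, hx.trans h1⟩
    rw [this, Real.volume_Icc, sub_zero]
  have e2 : (volume.restrict (Set.Icc (0:ℝ) 1)) (Set.Iic a)ᶜ = ENNReal.ofReal (1 - a) := by
    rw [Measure.restrict_apply measurableSet_Iic.compl, Set.compl_Iic]
    have : Set.Ioi a ∩ Set.Icc (0:ℝ) 1 = Set.Ioc a 1 := by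
      ext x
      simp only [Set.mem_inter_iff, Set.mem_Ioi, Set.mem_Icc, Set.mem_Ioc]
      constructor
      · rintro ⟨hx, _, hx1⟩; exact ⟨hx, hx1⟩
      · rintro ⟨hx, hx1⟩; exact ⟨hx, le_trans h0 hx.le, hx1⟩
    rw [this, Real.volume_Ioc]
  rw [e1, e2]
  ring

lemma peel (t : V) (c : (V → ℝ) → ℝ) (u w : (V → ℝ) → ℝ≥0∞)
    (hcm : Measurable c) (hum : Measurable u) (hwm : Measurable w)
    (hc0 : ∀ θ, 0 ≤ c θ) (hc1 : ∀ θ, c θ ≤ 1)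
    (hci : ∀ θ y, c (Function.update θ t y) = c θ)
    (hui : ∀ θ y, u (Function.update θ t y) = u θ)
    (hwi : ∀ θ y, w (Function.update θ t y) = w θ) :
    ∫⁻ θ, (if θ t ≤ c θ then u θ else w θ) ∂(cubeMeasure V)
      = ∫⁻ θ, (ENNReal.ofReal (c θ) * u θ + ENNReal.ofReal (1 - c θ) * w θ) ∂(cubeMeasure V) := by
  set μ : V → Measure ℝ := fun _ => volume.restrict (Set.Icc (0:ℝ) 1) with hμ
  have hset : MeasurableSet {θ : V → ℝ | θ t ≤ c θ} :=
    measurableSet_le (measurable_pi_apply t) hcm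
  have hf1 : Measurable fun θ : V → ℝ => if θ t ≤ c θ then u θ else w θ :=
    Measurable.ite hset hum hwm
  have hf2 : Measurable fun θ : V → ℝ =>
      ENNReal.ofReal (c θ) * u θ + ENNReal.ofReal (1 - c θ) * w θ :=
    ((ENNReal.measurable_ofReal.comp hcm).mul hum).add
      ((ENNReal.measurable_ofReal.comp ((measurable_const.sub hcm))).mul hwm)
  have hkey : (∫⋯∫⁻_{t}, (fun θ => if θ t ≤ c θ then u θ else w θ) ∂μ)
      = (∫⋯∫⁻_{t}, (fun θ => ENNReal.ofReal (c θ) * u θ + ENNReal.ofReal (1 - c θ) * w θ) ∂μ) := by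
    funext θ
    rw [MeasureTheory.lmarginal_singleton, MeasureTheory.lmarginal_singleton]
    have hLHS : ∀ y : ℝ, (if Function.update θ t y t ≤ c (Function.update θ t y)
        then u (Function.update θ t y) else w (Function.update θ t y))
        = (if y ≤ c θ then u θ else w θ) := by
      intro y
      rw [Function.update_self, hci, hui, hwi]
    have hRHS : ∀ y : ℝ, (ENNReal.ofReal (c (Function.update θ t y)) * u (Function.update θ t y)
        + ENNReal.ofReal (1 - c (Function.update θ t y)) * w (Function.update θ t y))
        = (ENNReal.ofReal (c θ) * u θ + ENNReal.ofReal (1 - c θ) * w θ) := by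
      intro y
      rw [hci, hui, hwi]
    calc ∫⁻ y, (if Function.update θ t y t ≤ c (Function.update θ t y)
          then u (Function.update θ t y) else w (Function.update θ t y)) ∂μ t
        = ∫⁻ y, (if y ≤ c θ then u θ else w θ) ∂μ t := by
          exact lintegral_congr hLHS
      _ = ENNReal.ofReal (c θ) * u θ + ENNReal.ofReal (1 - c θ) * w θ := by
          exact inner_calc (c θ) (hc0 θ) (hc1 θ) (u θ) (w θ)
      _ = ∫⁻ y, (ENNReal.ofReal (c (Function.update θ t y)) * u (Function.update θ t y)
            + ENNReal.ofReal (1 - c (Function.update θ t y)) * w (Function.update θ t y)) ∂μ t := by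
          rw [lintegral_congr hRHS, lintegral_const]
          have : (μ t) Set.univ = 1 := measure_univ
          rw [this, mul_one]
  have huniv : (Finset.univ : Finset V) = (Finset.univ.erase t) ∪ {t} := by
    rw [Finset.union_comm, ← Finset.insert_eq, Finset.insert_erase (Finset.mem_univ t)]
  have hdisj : Disjoint (Finset.univ.erase t) ({t} : Finset V) := by
    simp [Finset.disjoint_singleton_right]
  have hcube : cubeMeasure V = Measure.pi μ := rfl
  rw [hcube]
  rw [MeasureTheory.lintegral_eq_lmarginal_univ (μ := μ) (fun _ => (0:ℝ)),
    MeasureTheory.lintegral_eq_lmarginal_univ (μ := μ) (fun _ => (0:ℝ))]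
  rw [huniv, MeasureTheory.lmarginal_union μ _ hf1 hdisj,
    MeasureTheory.lmarginal_union μ _ hf2 hdisj]
  rw [hkey]

def Phi (gt : GTInstance V) (F : Finset V → ℝ) (S : Finset V) : ℝ≥0∞ :=
  ∫⁻ θ, ENNReal.ofReal (F (finalSet gt θ S)) ∂(cubeMeasure V)

def Tf (gt : GTInstance V) (F : Finset V → ℝ) (S : Finset V) : ℝ := (Phi gt F S).toReal

lemma Phi_ne_top (gt : GTInstance V) (F : Finset V → ℝ) (S : Finset V) : Phi gt F S ≠ ⊤ := by
  have hb : ∀ θ : V → ℝ, ENNReal.ofReal (F (finalSet gt θ S))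
      ≤ ∑ T : Finset V, ENNReal.ofReal (F T) := fun θ =>
    Finset.single_le_sum (f := fun T => ENNReal.ofReal (F T)) (fun T _ => zero_le)
      (Finset.mem_univ _)
  have hle : Phi gt F S ≤ ∑ T : Finset V, ENNReal.ofReal (F T) := by
    unfold Phi
    calc ∫⁻ θ, ENNReal.ofReal (F (finalSet gt θ S)) ∂(cubeMeasure V)
        ≤ ∫⁻ _, (∑ T : Finset V, ENNReal.ofReal (F T)) ∂(cubeMeasure V) := lintegral_mono hb
      _ = ∑ T : Finset V, ENNReal.ofReal (F T) := by
          rw [lintegral_const, measure_univ, mul_one]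
  refine ne_top_of_le_ne_top ?_ hle
  exact (ENNReal.sum_lt_top.mpr (fun T _ => ENNReal.ofReal_lt_top)).ne

lemma Tf_nonneg (gt : GTInstance V) (F : Finset V → ℝ) (S : Finset V) : 0 ≤ Tf gt F S :=
  ENNReal.toReal_nonneg

lemma Phi_add (gt : GTInstance V) {F G H : Finset V → ℝ} (hFG : ∀ T, F T = G T + H T)
    (hG0 : ∀ T, 0 ≤ G T) (hH0 : ∀ T, 0 ≤ H T) (S : Finset V) :
    Phi gt F S = Phi gt G S + Phi gt H S := by
  unfold Phi
  rw [← lintegral_add_left (measurable_comp_final gt S (fun T => ENNReal.ofReal (G T)))]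
  apply lintegral_congr
  intro θ
  rw [hFG, ENNReal.ofReal_add (hG0 _) (hH0 _)]

lemma Tf_add (gt : GTInstance V) {F G H : Finset V → ℝ} (hFG : ∀ T, F T = G T + H T)
    (hG0 : ∀ T, 0 ≤ G T) (hH0 : ∀ T, 0 ≤ H T) (S : Finset V) :
    Tf gt F S = Tf gt G S + Tf gt H S := by
  unfold Tf
  rw [Phi_add gt hFG hG0 hH0 S]
  exact ENNReal.toReal_add (Phi_ne_top gt G S) (Phi_ne_top gt H S)

-- ## Section 6 : the Phi recursion identities

section Ilemmas

variable {gt : GTInstance V} {t : V}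

lemma Phi_drop_of_mem (F : Finset V → ℝ) {S : Finset V} (htS : t ∈ S) :
    Phi gt F S = Phi (dropNode gt t) F S := by
  unfold Phi
  apply lintegral_congr
  intro θ
  unfold finalSet
  rw [cascade_drop_of_mem θ htS]

lemma Phi_drop_insert
    (hsink : ∀ w, w ≠ t → ∀ T : Finset V, gt.f w T = gt.f w (T.erase t))
    (F : Finset V → ℝ) {S : Finset V} (htS : t ∈ S) :
    Phi (dropNode gt t) F S
      = Phi (dropNode gt t) (fun T => F (insert t T)) (S.erase t) := by
  unfold Phi
  apply lintegral_congr_ae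
  filter_upwards [ae_pos] with θ hθ
  have h := cascade_drop_insert hsink θ (S.erase t) (hθ t) (Fintype.card V)
  rw [Finset.insert_erase htS] at h
  unfold finalSet
  rw [h]

lemma final_drop_of_not_mem
    (hsink : ∀ w, w ≠ t → ∀ T : Finset V, gt.f w T = gt.f w (T.erase t))
    (θ : V → ℝ) {S : Finset V} (htS : t ∉ S) (hθt : 0 < θ t) :
    (finalSet gt θ S).erase t = finalSet (dropNode gt t) θ S :=
  cascade_drop_of_not_mem hsink θ htS hθt _

lemma Phi_drop_of_not_mem
    (hsink : ∀ w, w ≠ t → ∀ T : Finset V, gt.f w T = gt.f w (T.erase t))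
    (hloct : ∀ T : Finset V, gt.f t T = gt.f t (T.erase t))
    (F : Finset V → ℝ) (hF0 : ∀ T, 0 ≤ F T) {S : Finset V} (htS : t ∉ S) :
    Phi gt F S = Phi (dropNode gt t) (ADAux.Hfun (gt.f t) t F) S := by
  set gt' := dropNode gt t with hgt'
  set c : (V → ℝ) → ℝ :=
    (fun θ : V → ℝ => gt.f t (finalSet gt' θ S)) ∘ (fun θ => Function.update θ t 1) with hc
  set u : (V → ℝ) → ℝ≥0∞ :=
    (fun θ : V → ℝ => ENNReal.ofReal (F (insert t (finalSet gt' θ S))))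
      ∘ (fun θ => Function.update θ t 1) with hu
  set w : (V → ℝ) → ℝ≥0∞ :=
    (fun θ : V → ℝ => ENNReal.ofReal (F (finalSet gt' θ S)))
      ∘ (fun θ => Function.update θ t 1) with hw
  have hcm : Measurable c :=
    (measurable_comp_final_real gt' S (fun T => gt.f t T)).comp (measurable_update_one t)
  have hum : Measurable u :=
    (measurable_comp_final gt' S (fun T => ENNReal.ofReal (F (insert t T)))).comp
      (measurable_update_one t)
  have hwm : Measurable w :=
    (measurable_comp_final gt' S (fun T => ENNReal.ofReal (F T))).comp
      (measurable_update_one t)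
  have hci : ∀ θ y, c (Function.update θ t y) = c θ := by
    intro θ y
    simp only [hc, Function.comp_apply, Function.update_idem]
  have hui : ∀ θ y, u (Function.update θ t y) = u θ := by
    intro θ y
    simp only [hu, Function.comp_apply, Function.update_idem]
  have hwi : ∀ θ y, w (Function.update θ t y) = w θ := by
    intro θ y
    simp only [hw, Function.comp_apply, Function.update_idem]
  have step1 : Phi gt F S = ∫⁻ θ, (if θ t ≤ c θ then u θ else w θ) ∂(cubeMeasure V) := by
    unfold Phi
    apply lintegral_congr_ae
    filter_upwards [ae_pos] with θ hθ
    have hupd : finalSet gt' (Function.update θ t 1) S = finalSet gt' θ S :=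
      cascade_drop_update θ S (hθ t) one_pos _
    have hcθ : c θ = gt.f t (finalSet gt' θ S) := by
      simp only [hc, Function.comp_apply, hupd]
    have huθ : u θ = ENNReal.ofReal (F (insert t (finalSet gt' θ S))) := by
      simp only [hu, Function.comp_apply, hupd]
    have hwθ : w θ = ENNReal.ofReal (F (finalSet gt' θ S)) := by
      simp only [hw, Function.comp_apply, hupd]
    by_cases hm : t ∈ finalSet gt θ S
    · have hcle : θ t ≤ c θ := by
        rw [hcθ]
        exact (mem_final_iff hsink hloct θ htS (hθ t)).mp hm
      rw [if_pos hcle, huθ]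
      have hfin : finalSet gt θ S = insert t (finalSet gt' θ S) := by
        conv_lhs => rw [← Finset.insert_erase hm]
        rw [final_drop_of_not_mem hsink θ htS (hθ t)]
      rw [hfin]
    · have hcle : ¬ θ t ≤ c θ := by
        rw [hcθ]
        exact fun hle => hm ((mem_final_iff hsink hloct θ htS (hθ t)).mpr hle)
      rw [if_neg hcle, hwθ]
      have hfin : finalSet gt θ S = finalSet gt' θ S := by
        conv_lhs => rw [← Finset.erase_eq_of_notMem hm]
        rw [final_drop_of_not_mem hsink θ htS (hθ t)]
      rw [hfin]
  have step2 := peel t c u w hcm hum hwm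
    (fun θ => gt.f_nonneg t _) (fun θ => gt.f_le_one t _) hci hui hwi
  have step3 : ∫⁻ θ, (ENNReal.ofReal (c θ) * u θ + ENNReal.ofReal (1 - c θ) * w θ)
        ∂(cubeMeasure V)
      = Phi gt' (ADAux.Hfun (gt.f t) t F) S := by
    unfold Phi
    apply lintegral_congr_ae
    filter_upwards [ae_pos] with θ hθ
    have hupd : finalSet gt' (Function.update θ t 1) S = finalSet gt' θ S :=
      cascade_drop_update θ S (hθ t) one_pos _
    have htF : t ∉ finalSet gt' θ S := not_mem_cascade_drop hsink θ htS (hθ t) _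
    have hcθ : c θ = gt.f t (finalSet gt' θ S) := by
      simp only [hc, Function.comp_apply, hupd]
    have huθ : u θ = ENNReal.ofReal (F (insert t (finalSet gt' θ S))) := by
      simp only [hu, Function.comp_apply, hupd]
    have hwθ : w θ = ENNReal.ofReal (F (finalSet gt' θ S)) := by
      simp only [hw, Function.comp_apply, hupd]
    rw [hcθ, huθ, hwθ]
    set T := finalSet gt' θ S
    have hHval : ADAux.Hfun (gt.f t) t F T
        = (1 - gt.f t T) * F T + gt.f t T * F (insert t T) := by
      unfold ADAux.Hfun
      rw [Finset.erase_eq_of_notMem htF]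
    rw [hHval]
    have h1 : 0 ≤ (1 - gt.f t T) * F T :=
      mul_nonneg (by linarith [gt.f_le_one t T]) (hF0 T)
    have h2 : 0 ≤ gt.f t T * F (insert t T) :=
      mul_nonneg (gt.f_nonneg t T) (hF0 _)
    rw [ENNReal.ofReal_add h1 h2,
      ENNReal.ofReal_mul (by linarith [gt.f_le_one t T] : (0:ℝ) ≤ 1 - gt.f t T),
      ENNReal.ofReal_mul (gt.f_nonneg t T)]
    ring
  rw [step1, step2, step3]

end Ilemmas

-- ## Section 7 : combination lemmas

lemma adDiff_reindex (g : Finset V → ℝ) {t : V} {A : Finset V} (htA : t ∉ A) (S : Finset V) :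
    adDiff (fun X => g (X.erase t)) A S = adDiff g A (S.erase t) := by
  unfold adDiff
  refine Finset.sum_congr rfl fun B _ => ?_
  have htAB : t ∉ A \ B := fun h => htA (Finset.mem_sdiff.mp h).1
  simp only [ADAux.erase_union_of_not_mem htAB]

lemma adDiff_ite_split (g1 g0 : Finset V → ℝ) {t : V} {A : Finset V} (htA : t ∉ A)
    (S : Finset V) :
    adDiff (fun X => if t ∈ X then g1 (X.erase t) else g0 (X.erase t)) A S
      = if t ∈ S then adDiff g1 A (S.erase t) else adDiff g0 A (S.erase t) := by
  by_cases htS : t ∈ S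
  · rw [if_pos htS]
    unfold adDiff
    refine Finset.sum_congr rfl fun B _ => ?_
    have htAB : t ∉ A \ B := fun h => htA (Finset.mem_sdiff.mp h).1
    have htX : t ∈ S ∪ (A \ B) := Finset.mem_union_left _ htS
    simp only [htX, if_true, ADAux.erase_union_of_not_mem htAB]
  · rw [if_neg htS]
    unfold adDiff
    refine Finset.sum_congr rfl fun B _ => ?_
    have htAB : t ∉ A \ B := fun h => htA (Finset.mem_sdiff.mp h).1
    have htX : t ∉ S ∪ (A \ B) := fun h =>
      (Finset.mem_union.mp h).elim (fun h' => htS h') (fun h' => htAB h')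
    simp only [htX, if_false, ADAux.erase_union_of_not_mem htAB]

lemma adDiff_ite_insert (g1 g0 : Finset V → ℝ) {t : V} {A : Finset V} (htA : t ∈ A)
    (S : Finset V) :
    adDiff (fun X => if t ∈ X then g1 (X.erase t) else g0 (X.erase t)) A S
      = if t ∈ S then 0
        else adDiff g1 (A.erase t) (S.erase t) - adDiff g0 (A.erase t) (S.erase t) := by
  conv_lhs => rw [← Finset.insert_erase htA]
  rw [ADAux.adDiff_insert _ (Finset.notMem_erase t A) S]
  have h1 : adDiff (fun X => if t ∈ insert t X then g1 ((insert t X).erase t)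
      else g0 ((insert t X).erase t)) (A.erase t) S
      = adDiff g1 (A.erase t) (S.erase t) := by
    have hcg : ∀ X : Finset V, (if t ∈ insert t X then g1 ((insert t X).erase t)
        else g0 ((insert t X).erase t)) = (fun X : Finset V => g1 (X.erase t)) X := by
      intro X
      rw [if_pos (Finset.mem_insert_self t X), Finset.erase_insert_eq_erase]
    rw [ADAux.adDiff_congr hcg, adDiff_reindex g1 (Finset.notMem_erase t A) S]
  rw [h1, adDiff_ite_split g1 g0 (Finset.notMem_erase t A) S]
  by_cases htS : t ∈ S
  · rw [if_pos htS, if_pos htS, sub_self]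
  · rw [if_neg htS, if_neg htS]

lemma adDiff_sum {ι : Type*} (I : Finset ι) (h : ι → Finset V → ℝ) (A S : Finset V) :
    adDiff (fun T => ∑ v ∈ I, h v T) A S = ∑ v ∈ I, adDiff (h v) A S := by
  unfold adDiff
  simp_rw [Finset.mul_sum]
  rw [Finset.sum_comm]

lemma isADk_indicator (v : V) (k : ℕ) :
    IsADk (fun T : Finset V => if v ∈ T then (1 : ℝ) else 0) k := by
  intro A S hne hAk
  by_cases hv : v ∈ A
  · by_cases he : A.erase v = ∅
    · have hA : A = {v} := by
        conv_lhs => rw [← Finset.insert_erase hv]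
        rw [he]
        rfl
      rw [hA, ADAux.adDiff_singleton]
      simp only [Finset.card_singleton]
      have hpow : ((-1 : ℝ)) ^ (1 + 1) = 1 := by norm_num
      rw [hpow, one_mul]
      by_cases hvS : v ∈ S
      · simp [hvS, Finset.mem_insert_self]
      · simp [hvS, Finset.mem_insert_self]
    · have h0 : adDiff (fun T : Finset V => if v ∈ T then (1 : ℝ) else 0) A S = 0 := by
        conv_lhs => rw [← Finset.insert_erase hv]
        rw [ADAux.adDiff_insert _ (Finset.notMem_erase v A) S]
        have h1 : adDiff (fun T : Finset V => if v ∈ insert v T then (1 : ℝ) else 0)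
            (A.erase v) S = adDiff (fun _ : Finset V => (1 : ℝ)) (A.erase v) S :=
          ADAux.adDiff_congr (fun T => by rw [if_pos (Finset.mem_insert_self v T)]) _ _
        have h2 : adDiff (fun _ : Finset V => (1 : ℝ)) (A.erase v) S = 0 := by
          rw [ADAux.adDiff_const_on (fun B _ => rfl)]
          simp [he]
        have h3 : adDiff (fun T : Finset V => if v ∈ T then (1 : ℝ) else 0) (A.erase v) S
            = 0 := by
          rw [ADAux.adDiff_const_on (c := if v ∈ S then (1 : ℝ) else 0) ?_]
          · simp [he]
          · intro B _
            have hvAB : v ∉ A.erase v \ B := fun h =>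
              (Finset.notMem_erase v A) (Finset.mem_sdiff.mp h).1
            by_cases hvS : v ∈ S
            · rw [if_pos (Finset.mem_union_left _ hvS), if_pos hvS]
            · rw [if_neg (fun h => (Finset.mem_union.mp h).elim hvS (fun h' => hvAB h')),
                if_neg hvS]
        rw [h1, h2, h3, sub_zero]
      rw [h0, mul_zero]
  · have h0 : adDiff (fun T : Finset V => if v ∈ T then (1 : ℝ) else 0) A S = 0 := by
      rw [ADAux.adDiff_const_on (c := if v ∈ S then (1 : ℝ) else 0) ?_]
      · simp [hne.ne_empty]
      · intro B _
        have hvAB : v ∉ A \ B := fun h => hv (Finset.mem_sdiff.mp h).1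
        by_cases hvS : v ∈ S
        · rw [if_pos (Finset.mem_union_left _ hvS), if_pos hvS]
        · rw [if_neg (fun h => (Finset.mem_union.mp h).elim hvS (fun h' => hvAB h')),
            if_neg hvS]
    rw [h0, mul_zero]

lemma activationProb_eq_Tf (gt : GTInstance V) (v : V) (S : Finset V) :
    activationProb gt v S = Tf gt (fun T => if v ∈ T then (1 : ℝ) else 0) S := by
  unfold activationProb Tf Phi
  congr 1
  have hind : ∀ θ : V → ℝ, ENNReal.ofReal (if v ∈ finalSet gt θ S then (1 : ℝ) else 0)
      = Set.indicator {θ' : V → ℝ | v ∈ finalSet gt θ' S} (fun _ => (1 : ℝ≥0∞)) θ := by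
    intro θ
    by_cases h : v ∈ finalSet gt θ S
    · rw [if_pos h, Set.indicator_of_mem (show θ ∈ {θ' : V → ℝ | v ∈ finalSet gt θ' S} from h)]
      exact ENNReal.ofReal_one
    · rw [if_neg h, Set.indicator_of_notMem (show θ ∉ {θ' : V → ℝ | v ∈ finalSet gt θ' S}
        from h)]
      exact ENNReal.ofReal_zero
  rw [show (∫⁻ θ, ENNReal.ofReal (if v ∈ finalSet gt θ S then (1 : ℝ) else 0) ∂(cubeMeasure V))
      = ∫⁻ θ, Set.indicator {θ' : V → ℝ | v ∈ finalSet gt θ' S} (fun _ => (1 : ℝ≥0∞)) θ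
        ∂(cubeMeasure V) from lintegral_congr hind]
  rw [lintegral_indicator_const (measurableSet_mem_finalSet gt S v), one_mul]

-- ## Section 8 : the main induction

theorem main_ind (k : ℕ) (hk : 1 ≤ k) :
    ∀ n : ℕ, ∀ gt : GTInstance V, IsDAG gt → (∀ v, IsADk (gt.f v) k) →
      (Finset.univ.filter fun v => gt.f v ≠ (fun _ => (0:ℝ))).card = n →
      ((∀ F : Finset V → ℝ, (∀ T, 0 ≤ F T) → IsADk F k → IsADk (Tf gt F) k) ∧
       (∀ j : ℕ, j ≤ k → ∀ G : Finset V → ℝ, cmk G j → cmk (Tf gt G) j)) := by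
  intro n
  induction n using Nat.strong_induction_on with
  | _ n ihn =>
  intro gt hdag hloc hcard
  rcases Nat.eq_zero_or_pos n with hn0 | hnpos
  · -- base case : all threshold functions vanish
    subst hn0
    have hzero : ∀ v, gt.f v = fun _ => (0:ℝ) := by
      intro v
      by_contra hv
      have hmem : v ∈ Finset.univ.filter fun v => gt.f v ≠ (fun _ => (0:ℝ)) :=
        Finset.mem_filter.mpr ⟨Finset.mem_univ v, hv⟩
      rw [Finset.card_eq_zero.mp hcard] at hmem
      exact absurd hmem (Finset.notMem_empty v)
    have hbase : ∀ (F : Finset V → ℝ), (∀ T, 0 ≤ F T) → Tf gt F = F := by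
      intro F hF0
      funext S
      have hfinal : ∀ᵐ θ ∂(cubeMeasure V), finalSet gt θ S = S := by
        filter_upwards [ae_pos] with θ hθ
        have hcas : ∀ s, cascade gt θ S s = S := by
          intro s
          induction s with
          | zero => rfl
          | succ s ih =>
            rw [cascade_succ, ih]
            have hfe : Finset.univ.filter (fun v => θ v ≤ gt.f v S) = ∅ := by
              apply Finset.filter_eq_empty_iff.mpr
              intro v _
              rw [hzero v]
              exact not_le.mpr (hθ v)
            rw [hfe, Finset.union_empty]
        exact hcas _
      unfold Tf Phi
      rw [lintegral_congr_ae (hfinal.mono fun θ h => by rw [h])]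
      rw [lintegral_const, measure_univ, mul_one, ENNReal.toReal_ofReal (hF0 S)]
    constructor
    · intro F hF0 hFad
      rw [hbase F hF0]
      exact hFad
    · intro j _ G hG
      rw [hbase G (fun T => ADAux.cmk_nonneg hG T)]
      exact hG
  · -- inductive step
    have hZne : (Finset.univ.filter fun v => gt.f v ≠ (fun _ => (0:ℝ))).Nonempty := by
      rw [← Finset.card_pos, hcard]; exact hnpos
    have hwf : WellFounded (fun a b : V => Relation.TransGen gt.E b a) := by
      have h1 : IsTrans V (fun a b : V => Relation.TransGen gt.E b a) :=
        ⟨fun a b c hab hbc => Relation.TransGen.trans hbc hab⟩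
      have h2 : IsIrrefl V (fun a b : V => Relation.TransGen gt.E b a) :=
        ⟨fun a h => hdag a h⟩
      exact Finite.wellFounded_of_trans_of_irrefl _
    obtain ⟨t, htZ, hmax⟩ := hwf.has_min {v | gt.f v ≠ (fun _ => (0:ℝ))}
      (by obtain ⟨v, hv⟩ := hZne; exact ⟨v, (Finset.mem_filter.mp hv).2⟩)
    have hnoedge : ∀ w, gt.f w ≠ (fun _ => (0:ℝ)) → ¬ gt.E t w := by
      intro w hw hE
      exact hmax w hw (Relation.TransGen.single hE)
    have htt : ¬ gt.E t t := fun h => hdag t (Relation.TransGen.single h)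
    have hfilter_erase : ∀ (w : V), ¬ gt.E t w →
        ∀ T : Finset V, gt.f w T = gt.f w (T.erase t) := by
      intro w hw T
      rw [gt.f_local w T, gt.f_local w (T.erase t)]
      congr 1
      ext v
      simp only [Finset.mem_filter, Finset.mem_erase]
      constructor
      · rintro ⟨hvT, hE⟩
        exact ⟨⟨fun hvt => hw (hvt ▸ hE), hvT⟩, hE⟩
      · rintro ⟨⟨_, hvT⟩, hE⟩
        exact ⟨hvT, hE⟩
    have hloct : ∀ T : Finset V, gt.f t T = gt.f t (T.erase t) := hfilter_erase t htt
    have hsink : ∀ w, w ≠ t → ∀ T : Finset V, gt.f w T = gt.f w (T.erase t) := by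
      intro w _ T
      by_cases hfw : gt.f w = (fun _ => (0:ℝ))
      · rw [hfw]
      · exact hfilter_erase w (hnoedge w hfw) T
    set gt' := dropNode gt t with hgt'
    have hdag' : IsDAG gt' := hdag
    have hloc' : ∀ v, IsADk (gt'.f v) k := by
      intro v
      by_cases hv : v = t
      · subst hv
        intro A S hne _
        have hzf : gt'.f v = fun _ => (0:ℝ) := funext fun T => dropNode_f_same gt v T
        have hz : adDiff (gt'.f v) A S = 0 := by
          rw [hzf, ADAux.adDiff_const_on (fun B _ => rfl)]
          simp [hne.ne_empty]
        rw [hz, mul_zero]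
      · rw [dropNode_f_noteq gt hv]
        exact hloc v
    have hcard' : (Finset.univ.filter fun v => gt'.f v ≠ (fun _ => (0:ℝ))).card = n - 1 := by
      have hfe : (Finset.univ.filter fun v => gt'.f v ≠ (fun _ => (0:ℝ)))
          = (Finset.univ.filter fun v => gt.f v ≠ (fun _ => (0:ℝ))).erase t := by
        ext v
        simp only [Finset.mem_filter, Finset.mem_erase, Finset.mem_univ, true_and]
        by_cases hv : v = t
        · subst hv
          constructor
          · intro h
            exact absurd (funext fun T => dropNode_f_same gt v T) h
          · rintro ⟨h, _⟩
            exact absurd rfl h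
        · rw [dropNode_f_noteq gt hv]
          constructor
          · intro h; exact ⟨hv, h⟩
          · rintro ⟨_, h⟩; exact h
      have hmemt : t ∈ Finset.univ.filter fun v => gt.f v ≠ (fun _ => (0:ℝ)) :=
        Finset.mem_filter.mpr ⟨Finset.mem_univ t, htZ⟩
      have hce := Finset.card_erase_of_mem hmemt
      rw [hfe, hce, hcard]
    have IH := ihn (n - 1) (by omega) gt' hdag' hloc' hcard'
    have IHa := IH.1
    have IHb := IH.2
    have hftig : ∀ T : Finset V, gt.f t (insert t T) = gt.f t T := by
      intro T
      rw [hloct (insert t T), Finset.erase_insert_eq_erase, ← hloct T]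
    have hrep : ∀ (F : Finset V → ℝ), (∀ T, 0 ≤ F T) → ∀ X : Finset V,
        Tf gt F X = if t ∈ X then Tf gt' (fun T => F (insert t T)) (X.erase t)
          else Tf gt' (ADAux.Hfun (gt.f t) t F) (X.erase t) := by
      intro F hF0 X
      by_cases htX : t ∈ X
      · rw [if_pos htX]
        unfold Tf
        rw [Phi_drop_of_mem F htX, Phi_drop_insert hsink F htX]
      · rw [if_neg htX]
        unfold Tf
        rw [Phi_drop_of_not_mem hsink hloct F hF0 htX, Finset.erase_eq_of_notMem htX]
    constructor
    · -- part (a)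
      intro F hF0 hFad
      have hFmono : ∀ {S T : Finset V}, S ⊆ T → F S ≤ F T := ADAux.isADk_monotone hk hFad
      have hF10 : ∀ T : Finset V, 0 ≤ F (insert t T) := fun T => hF0 _
      have hHF0 : ∀ T, 0 ≤ ADAux.Hfun (gt.f t) t F T :=
        ADAux.Hfun_nonneg (gt.f_nonneg t) (gt.f_le_one t) hF0
      have hWF0 : ∀ T, 0 ≤ ADAux.Wfun (gt.f t) t F T :=
        ADAux.Wfun_nonneg (gt.f_le_one t) hFmono
      have hsum : ∀ T : Finset V, F (insert t T)
          = ADAux.Hfun (gt.f t) t F T + ADAux.Wfun (gt.f t) t F T := by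
        intro T
        unfold ADAux.Hfun ADAux.Wfun
        ring
      have hg1 : IsADk (Tf gt' (fun T => F (insert t T))) k :=
        IHa _ hF10 (ADAux.isADk_comp_insert hFad)
      have hg0 : IsADk (Tf gt' (ADAux.Hfun (gt.f t) t F)) k :=
        IHa _ hHF0 (ADAux.isADk_Hfun hk hftig (gt.f_le_one t) (gt.f_nonneg t) (hloc t) hFad)
      have hgW : cmk (Tf gt' (ADAux.Wfun (gt.f t) t F)) (k - 1) :=
        IHb (k - 1) (by omega) _ (ADAux.cmk_Wfun hk (gt.f_le_one t) (hloc t) hFad hFmono)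
      have hdiffW : ∀ X, Tf gt' (fun T => F (insert t T)) X
          = Tf gt' (ADAux.Hfun (gt.f t) t F) X + Tf gt' (ADAux.Wfun (gt.f t) t F) X :=
        fun X => Tf_add gt' hsum hHF0 hWF0 X
      intro A S hAne hAk
      have hR : adDiff (Tf gt F) A S
          = adDiff (fun X => if t ∈ X then Tf gt' (fun T => F (insert t T)) (X.erase t)
              else Tf gt' (ADAux.Hfun (gt.f t) t F) (X.erase t)) A S :=
        ADAux.adDiff_congr (fun X => hrep F hF0 X) A S
      rw [hR]
      by_cases htA : t ∈ A
      · rw [adDiff_ite_insert _ _ htA S]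
        by_cases htS : t ∈ S
        · rw [if_pos htS, mul_zero]
        · rw [if_neg htS]
          have hc1 : 1 ≤ A.card := Finset.card_pos.mpr ⟨t, htA⟩
          have hAe : (A.erase t).card + 1 = A.card := by
            rw [Finset.card_erase_of_mem htA]
            omega
          have hsub : adDiff (Tf gt' (fun T => F (insert t T))) (A.erase t) (S.erase t)
              - adDiff (Tf gt' (ADAux.Hfun (gt.f t) t F)) (A.erase t) (S.erase t)
              = adDiff (Tf gt' (ADAux.Wfun (gt.f t) t F)) (A.erase t) (S.erase t) := by
            have h2 := ADAux.adDiff_congr (fun X => hdiffW X) (A.erase t) (S.erase t)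
            rw [ADAux.adDiff_add (Tf gt' (ADAux.Hfun (gt.f t) t F))
              (Tf gt' (ADAux.Wfun (gt.f t) t F)) (A.erase t) (S.erase t)] at h2
            linarith
          rw [hsub, ← hAe]
          rw [show (A.erase t).card + 1 + 1 = (A.erase t).card + 2 from rfl,
            ADAux.neg_one_pow_add_two]
          exact hgW (A.erase t) (S.erase t) (by omega)
      · rw [adDiff_ite_split _ _ htA S]
        by_cases htS : t ∈ S
        · rw [if_pos htS]
          exact hg1 A (S.erase t) hAne hAk
        · rw [if_neg htS]
          exact hg0 A (S.erase t) hAne hAk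
    · -- part (b)
      intro j hjk G hG
      have hG0 : ∀ T, 0 ≤ G T := fun T => ADAux.cmk_nonneg hG T
      have hG10 : ∀ T : Finset V, 0 ≤ G (insert t T) := fun T => hG0 _
      have hHG0 : ∀ T, 0 ≤ ADAux.Hfun (gt.f t) t G T :=
        ADAux.Hfun_nonneg (gt.f_nonneg t) (gt.f_le_one t) hG0
      have hg1 : cmk (Tf gt' (fun T => G (insert t T))) j :=
        IHb j hjk _ (ADAux.cmk_comp_insert hG)
      have hg0 : cmk (Tf gt' (ADAux.Hfun (gt.f t) t G)) j :=
        IHb j hjk _ (ADAux.cmk_Hfun hjk hftig (gt.f_le_one t) (gt.f_nonneg t) (hloc t) hG)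
      intro A S hAj
      have hR : adDiff (Tf gt G) A S
          = adDiff (fun X => if t ∈ X then Tf gt' (fun T => G (insert t T)) (X.erase t)
              else Tf gt' (ADAux.Hfun (gt.f t) t G) (X.erase t)) A S :=
        ADAux.adDiff_congr (fun X => hrep G hG0 X) A S
      rw [hR]
      by_cases htA : t ∈ A
      · have hc1 : 1 ≤ A.card := Finset.card_pos.mpr ⟨t, htA⟩
        have hj1 : 1 ≤ j := le_trans hc1 hAj
        have hWG0 : ∀ T, 0 ≤ ADAux.WfunG (gt.f t) t G T :=
          ADAux.WfunG_nonneg hj1 (gt.f_le_one t) hG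
        have hsumG : ∀ T : Finset V, ADAux.Hfun (gt.f t) t G T
            = G (insert t T) + ADAux.WfunG (gt.f t) t G T := by
          intro T
          unfold ADAux.Hfun ADAux.WfunG
          ring
        have hgW : cmk (Tf gt' (ADAux.WfunG (gt.f t) t G)) (j - 1) :=
          IHb (j - 1) (by omega) _
            (ADAux.cmk_WfunG hj1 hjk (gt.f_le_one t) (hloc t) hG)
        have hdiffW : ∀ X, Tf gt' (ADAux.Hfun (gt.f t) t G) X
            = Tf gt' (fun T => G (insert t T)) X + Tf gt' (ADAux.WfunG (gt.f t) t G) X :=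
          fun X => Tf_add gt' hsumG hG10 hWG0 X
        rw [adDiff_ite_insert _ _ htA S]
        by_cases htS : t ∈ S
        · rw [if_pos htS, mul_zero]
        · rw [if_neg htS]
          have hAe : (A.erase t).card + 1 = A.card := by
            rw [Finset.card_erase_of_mem htA]
            omega
          have hsub : adDiff (Tf gt' (fun T => G (insert t T))) (A.erase t) (S.erase t)
              - adDiff (Tf gt' (ADAux.Hfun (gt.f t) t G)) (A.erase t) (S.erase t)
              = - adDiff (Tf gt' (ADAux.WfunG (gt.f t) t G)) (A.erase t) (S.erase t) := by
            have h2 := ADAux.adDiff_congr (fun X => hdiffW X) (A.erase t) (S.erase t)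
            rw [ADAux.adDiff_add (Tf gt' (fun T => G (insert t T)))
              (Tf gt' (ADAux.WfunG (gt.f t) t G)) (A.erase t) (S.erase t)] at h2
            linarith
          rw [hsub, ← hAe]
          have key : (-1 : ℝ) ^ ((A.erase t).card + 1)
              * -adDiff (Tf gt' (ADAux.WfunG (gt.f t) t G)) (A.erase t) (S.erase t)
              = (-1 : ℝ) ^ ((A.erase t).card)
                * adDiff (Tf gt' (ADAux.WfunG (gt.f t) t G)) (A.erase t) (S.erase t) := by
            rw [pow_succ]; ring
          rw [key]
          exact hgW (A.erase t) (S.erase t) (by omega)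
      · rw [adDiff_ite_split _ _ htA S]
        by_cases htS : t ∈ S
        · rw [if_pos htS]
          exact hg1 A (S.erase t) hAj
        · rw [if_neg htS]
          exact hg0 A (S.erase t) hAj

end GTAux



/-- In the general threshold model on a directed acyclic graph, if every threshold
function is AD-`k` (locally AD-`k`), then the spread function `σ` is AD-`k`
(globally AD-`k`). -/
theorem dag_locally_ADk_implies_globally_ADk
    {V : Type*} [Fintype V] [DecidableEq V] (gt : GTInstance V)
    (hdag : IsDAG gt) (k : ℕ) (hloc : ∀ v, IsADk (gt.f v) k) :
    IsADk (spread gt) k := by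
  rcases Nat.eq_zero_or_pos k with hk0 | hk
  · intro A S hne hcard
    exfalso
    have := Finset.card_pos.mpr hne
    omega
  · have hmain := (GTAux.main_ind k hk
      ((Finset.univ.filter fun v => gt.f v ≠ (fun _ => (0:ℝ))).card) gt hdag hloc rfl).1
    intro A S hne hcard
    have hspread : ∀ X : Finset V, spread gt X
        = ∑ v : V, GTAux.Tf gt (fun T => if v ∈ T then (1:ℝ) else 0) X := by
      intro X
      unfold spread
      exact Finset.sum_congr rfl fun v _ => GTAux.activationProb_eq_Tf gt v X
    rw [ADAux.adDiff_congr hspread A S,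
      GTAux.adDiff_sum Finset.univ
        (fun v => GTAux.Tf gt (fun T => if v ∈ T then (1:ℝ) else 0)) A S,
      Finset.mul_sum]
    refine Finset.sum_nonneg fun v _ => ?_
    exact hmain (fun T => if v ∈ T then (1:ℝ) else 0)
      (fun T => by by_cases h : v ∈ T <;> simp [h])
      (GTAux.isADk_indicator v k) A S hne hcard

end
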